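/- arXiv:2208.09729 — 9 statements merged into one kernel-verified Lean document; each statement's English description precedes it below -/
import Mathlib

section
/- Let x be an integer and n₁, n₂ ≥ 2 be positive integers with gcd(n₁,n₂)=1. Then x is not in the numerical semigroup ⟨n₁,n₂⟩ = {t₁n₁ + t₂n₂ : t₁,t₂ ∈ ℕ} if and only if x = n₁n₂ - a·n₁ - b·n₂ for some positive integers a, b. -/
/-- x ∉ ⟨n₁,n₂⟩ iff x = n₁n₂ - a n₁ - b n₂ for some positive integers a, b. -/
theorem stmt1 (x n1 n2 : ℤ) (h1 : 2 ≤ n1) (h2 : 2 ≤ n2) (hco : IsCoprime n1 n2) :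
    x ∉ {y : ℤ | ∃ t1 t2 : ℕ, y = t1 * n1 + t2 * n2} ↔
      ∃ a b : ℕ, 0 < a ∧ 0 < b ∧ x = n1 * n2 - a * n1 - b * n2 := by
  have hn1 : (0:ℤ) < n1 := by linarith
  have hn2 : (0:ℤ) < n2 := by linarith
  constructor
  · intro hx
    -- get a representation x = c*n1 + d*n2
    obtain ⟨u, v, huv⟩ := hco
    set c : ℤ := (u * x) % n2 with hc
    set k : ℤ := (u * x) / n2 with hk
    have hdiv : n2 * k + c = u * x := Int.mul_ediv_add_emod (u * x) n2
    have hc0 : 0 ≤ c := Int.emod_nonneg _ (by linarith)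
    have hcn : c < n2 := Int.emod_lt_of_pos _ hn2
    set t : ℤ := v * x + k * n1 with ht
    have hxrep : x = c * n1 + t * n2 := by
      have : x = (u * x) * n1 + (v * x) * n2 := by linear_combination x * huv.symm
      rw [this]; rw [← hdiv]; ring
    -- if t ≥ 0 then x is in the set, contradiction
    by_cases htpos : 0 ≤ t
    · exfalso
      exact hx ⟨c.toNat, t.toNat, by
        rw [Int.toNat_of_nonneg hc0, Int.toNat_of_nonneg htpos]; exact hxrep⟩
    · push_neg at htpos
      refine ⟨(n2 - c).toNat, (-t).toNat, ?_, ?_, ?_⟩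
      · simp [Int.lt_toNat]; linarith
      · simp [Int.lt_toNat]; linarith
      · rw [Int.toNat_of_nonneg (by linarith : (0:ℤ) ≤ n2 - c),
          Int.toNat_of_nonneg (by linarith : (0:ℤ) ≤ -t)]
        rw [hxrep]; ring
  · rintro ⟨a, b, ha, hb, hx⟩ ⟨t1, t2, hrep⟩
    have key : ((t1:ℤ) + a) * n1 + ((t2:ℤ) + b) * n2 = n1 * n2 := by
      rw [hrep] at hx; linarith
    have hd1 : n1 ∣ ((t2:ℤ) + b) := by
      apply hco.dvd_of_dvd_mul_right
      have : n1 ∣ ((t2:ℤ) + b) * n2 := ⟨n2 - ((t1:ℤ) + a), by linarith⟩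
      exact this
    have hd2 : n2 ∣ ((t1:ℤ) + a) := by
      apply hco.symm.dvd_of_dvd_mul_right
      have : n2 ∣ ((t1:ℤ) + a) * n1 := ⟨n1 - ((t2:ℤ) + b), by linarith⟩
      exact this
    have hb' : (0:ℤ) < (t2:ℤ) + b := by positivity
    have ha' : (0:ℤ) < (t1:ℤ) + a := by positivity
    have h1' : n1 ≤ (t2:ℤ) + b := Int.le_of_dvd hb' hd1
    have h2' : n2 ≤ (t1:ℤ) + a := Int.le_of_dvd ha' hd2
    nlinarith [key]
end

section
/- Let r, m, λ₁,…,λ_r be positive integers, λ₀ = λ₁ + ⋯ + λ_r, r < λ₀, and define η_k = max { min_{1≤i≤r} ⌊s_i m / λ_i⌋ : ∑_{i=1}^r s_i = k, 1 ≤ s_i ≤ λ_i } for r ≤ k ≤ λ₀ - 1. Then the multiset {η_k : r ≤ k ≤ λ₀ - 1} equals the multiset {⌊s m / λ_i⌋ : 1 ≤ s ≤ λ_i - 1, 1 ≤ i ≤ r}. -/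
open Finset

/-- min over i < r of ⌊s i * m / lam i⌋ -/
noncomputable def kinf (m r : ℕ) (lam : ℕ → ℕ) (s : ℕ → ℕ) : ℕ :=
  sInf {w : ℕ | ∃ i, i < r ∧ w = s i * m / lam i}

/-- η_k = max over tuples (s_1,…,s_r) with 1 ≤ s_i ≤ λ_i and ∑ s_i = k of min_i ⌊s_i m/λ_i⌋ -/
noncomputable def eta (m r : ℕ) (lam : ℕ → ℕ) (k : ℕ) : ℕ :=
  sSup {v : ℕ | ∃ s : ℕ → ℕ, (∀ i, i < r → 1 ≤ s i ∧ s i ≤ lam i) ∧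
      (∑ i ∈ Finset.range r, s i) = k ∧ v = kinf m r lam s}

/-- extended η: 0 for k < r, η_k for r ≤ k < λ₀, m-1 for k ≥ λ₀ -/
noncomputable def etaExt (m r lam0 : ℕ) (lam : ℕ → ℕ) (k : ℕ) : ℕ :=
  if k < r then 0 else if k < lam0 then eta m r lam k else m - 1

/-- ε_k = m k - λ₀ (η_k + 1) -/
noncomputable def eps (m r lam0 : ℕ) (lam : ℕ → ℕ) (k : ℕ) : ℤ :=
  (m : ℤ) * k - (lam0 : ℤ) * (etaExt m r lam0 lam k + 1)

def IsNumericalSemigroup (H : Set ℕ) : Prop :=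
  0 ∈ H ∧ (∀ a ∈ H, ∀ b ∈ H, a + b ∈ H) ∧ {x : ℕ | x ∉ H}.Finite

open scoped Classical

/-- interpolation: given lower/upper bounds, a tuple with any feasible sum exists -/
lemma interpolate (r : ℕ) (a b : ℕ → ℕ) (hab : ∀ i, i < r → a i ≤ b i)
    (k : ℕ) (hk1 : ∑ i ∈ Finset.range r, a i ≤ k) (hk2 : k ≤ ∑ i ∈ Finset.range r, b i) :
    ∃ s : ℕ → ℕ, (∀ i, i < r → a i ≤ s i ∧ s i ≤ b i) ∧ ∑ i ∈ Finset.range r, s i = k := by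
  induction r generalizing k with
  | zero =>
    refine ⟨fun _ => 0, fun i hi => absurd hi (by omega), ?_⟩
    simp at hk1 hk2 ⊢
    omega
  | succ n ih =>
    rw [Finset.sum_range_succ] at hk1 hk2
    have hAB : ∑ i ∈ Finset.range n, a i ≤ ∑ i ∈ Finset.range n, b i :=
      Finset.sum_le_sum fun i hi => hab i (by simp at hi; omega)
    have han : a n ≤ b n := hab n (by omega)
    set c := max (a n) (k - ∑ i ∈ Finset.range n, b i) with hc
    have hc1 : a n ≤ c := le_max_left _ _
    have hc2 : k - ∑ i ∈ Finset.range n, b i ≤ c := le_max_right _ _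
    have hcases : c = a n ∨ c = k - ∑ i ∈ Finset.range n, b i := max_choice _ _
    obtain ⟨s, hs, hsum⟩ := ih (fun i hi => hab i (by omega)) (k - c) (by omega) (by omega)
    refine ⟨Function.update s n c, ?_, ?_⟩
    · intro i hi
      rcases Nat.lt_or_ge i n with h | h
      · rw [Function.update_of_ne (by omega)]
        exact hs i h
      · have : i = n := by omega
        subst this
        rw [Function.update_self]
        constructor <;> omega
    · rw [Finset.sum_range_succ, Function.update_self]
      have : ∑ i ∈ Finset.range n, Function.update s n c i = ∑ i ∈ Finset.range n, s i := by
        apply Finset.sum_congr rfl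
        intro i hi
        simp at hi
        rw [Function.update_of_ne (by omega)]
      rw [this, hsum]
      omega

/-- ceiling threshold : least s with t ≤ ⌊s m / L⌋ -/
def athr (m : ℕ) (L : ℕ) (t : ℕ) : ℕ := (t * L + m - 1) / m

lemma athr_le_iff {m : ℕ} (hm : 0 < m) (L t s : ℕ) :
    athr m L t ≤ s ↔ t * L ≤ s * m := by
  unfold athr
  rw [Nat.div_le_iff_le_mul_add_pred hm, Nat.mul_comm m s]
  set x := t * L
  set y := s * m
  omega

lemma nat_le_div_iff {m L t s : ℕ} (hL : 0 < L) : t ≤ s * m / L ↔ t * L ≤ s * m :=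
  Nat.le_div_iff_mul_le hL

lemma one_le_athr {m : ℕ} (hm : 0 < m) {L : ℕ} (hL : 0 < L) {t : ℕ} (ht : 1 ≤ t) :
    1 ≤ athr m L t := by
  have h1 : 1 ≤ t * L := Nat.mul_pos ht hL
  unfold athr
  rw [Nat.le_div_iff_mul_le hm]
  omega

lemma athr_le_lam_iff {m : ℕ} (hm : 0 < m) {L : ℕ} (hL : 0 < L) (t : ℕ) :
    athr m L t ≤ L ↔ t ≤ m := by
  rw [athr_le_iff hm]
  constructor <;> intro h
  · by_contra hc
    push_neg at hc
    have h2 : (m + 1) * L ≤ t * L := Nat.mul_le_mul_right _ hc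
    have h3 : L * m = m * L := Nat.mul_comm _ _
    nlinarith
  · calc t * L ≤ m * L := Nat.mul_le_mul_right _ h
      _ = L * m := Nat.mul_comm _ _

lemma kinf_le {m r : ℕ} {lam s : ℕ → ℕ} {i : ℕ} (hi : i < r) :
    kinf m r lam s ≤ s i * m / lam i := Nat.sInf_le ⟨i, hi, rfl⟩

lemma le_kinf {m r : ℕ} (hr : 0 < r) {lam s : ℕ → ℕ} {t : ℕ}
    (h : ∀ i, i < r → t ≤ s i * m / lam i) : t ≤ kinf m r lam s :=
  le_csInf ⟨s 0 * m / lam 0, 0, hr, rfl⟩ (by rintro w ⟨i, hi, rfl⟩; exact h i hi)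

/-- the set defining eta -/
def etaSet (m r : ℕ) (lam : ℕ → ℕ) (k : ℕ) : Set ℕ :=
  {v : ℕ | ∃ s : ℕ → ℕ, (∀ i, i < r → 1 ≤ s i ∧ s i ≤ lam i) ∧
      (∑ i ∈ Finset.range r, s i) = k ∧ v = kinf m r lam s}

lemma eta_eq_sSup (m r : ℕ) (lam : ℕ → ℕ) (k : ℕ) :
    eta m r lam k = sSup (etaSet m r lam k) := rfl

lemma etaSet_bdd {m r : ℕ} (hr : 0 < r) (lam : ℕ → ℕ) (k : ℕ) :
    BddAbove (etaSet m r lam k) := by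
  refine ⟨lam 0 * m, ?_⟩
  rintro v ⟨s, hs, hsum, rfl⟩
  calc kinf m r lam s ≤ s 0 * m / lam 0 := kinf_le hr
    _ ≤ s 0 * m := Nat.div_le_self _ _
    _ ≤ lam 0 * m := Nat.mul_le_mul_right _ (hs 0 hr).2

lemma etaSet_nonempty {m r : ℕ} (lam : ℕ → ℕ)
    (hlam : ∀ i, i < r → 0 < lam i) {k : ℕ} (hk1 : r ≤ k)
    (hk2 : k ≤ ∑ i ∈ Finset.range r, lam i) :
    (etaSet m r lam k).Nonempty := by
  obtain ⟨s, hs, hsum⟩ := interpolate r (fun _ => 1) lam (fun i hi => hlam i hi) k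
    (by simpa using hk1) hk2
  exact ⟨kinf m r lam s, s, hs, hsum, rfl⟩

lemma eta_mem {m r : ℕ} (hr : 0 < r) (lam : ℕ → ℕ)
    (hlam : ∀ i, i < r → 0 < lam i) {k : ℕ} (hk1 : r ≤ k)
    (hk2 : k ≤ ∑ i ∈ Finset.range r, lam i) :
    eta m r lam k ∈ etaSet m r lam k :=
  Nat.sSup_mem (etaSet_nonempty lam hlam hk1 hk2) (etaSet_bdd hr lam k)

lemma le_eta {m r : ℕ} (hr : 0 < r) {lam : ℕ → ℕ} {k t v : ℕ}
    (hv : v ∈ etaSet m r lam k) (htv : t ≤ v) : t ≤ eta m r lam k :=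
  htv.trans (le_csSup (etaSet_bdd hr lam k) hv)

/-- the key characterization: η_k ≥ t iff k ≥ ∑ athr -/
lemma eta_ge_iff {m r : ℕ} (hm : 0 < m) (hr : 0 < r) {lam : ℕ → ℕ}
    (hlam : ∀ i, i < r → 0 < lam i) {t k : ℕ} (ht : 1 ≤ t) (hk1 : r ≤ k)
    (hk2 : k ≤ ∑ i ∈ Finset.range r, lam i) :
    t ≤ eta m r lam k ↔ (∑ i ∈ Finset.range r, athr m (lam i) t) ≤ k := by
  constructor
  · intro hte
    obtain ⟨s, hs, hsum, hv⟩ := eta_mem hr lam hlam hk1 hk2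
    rw [← hsum]
    apply Finset.sum_le_sum
    intro i hi
    rw [Finset.mem_range] at hi
    have h1 : t ≤ s i * m / lam i := le_trans (hv ▸ hte) (kinf_le hi)
    rw [nat_le_div_iff (hlam i hi)] at h1
    exact (athr_le_iff hm _ _ _).mpr h1
  · intro hAk
    by_cases htm : t ≤ m
    · have hab : ∀ i, i < r → athr m (lam i) t ≤ lam i := fun i hi =>
        (athr_le_lam_iff hm (hlam i hi) t).mpr htm
      obtain ⟨s, hs, hsum⟩ := interpolate r (fun i => athr m (lam i) t) lam hab k hAk hk2
      have hmem : kinf m r lam s ∈ etaSet m r lam k := by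
        refine ⟨s, fun i hi => ⟨?_, (hs i hi).2⟩, hsum, rfl⟩
        exact le_trans (one_le_athr hm (hlam i hi) ht) (hs i hi).1
      refine le_eta hr hmem (le_kinf hr ?_)
      intro i hi
      rw [nat_le_div_iff (hlam i hi), ← athr_le_iff hm]
      exact (hs i hi).1
    · exfalso
      push_neg at htm
      have h1 : ∀ i ∈ Finset.range r, lam i + 1 ≤ athr m (lam i) t := by
        intro i hi
        rw [Finset.mem_range] at hi
        have := (athr_le_lam_iff hm (hlam i hi) t).not.mpr (by omega)
        omega
      have h2 : ∑ i ∈ Finset.range r, (lam i + 1) ≤ ∑ i ∈ Finset.range r, athr m (lam i) t :=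
        Finset.sum_le_sum h1
      rw [Finset.sum_add_distrib, Finset.sum_const, Finset.card_range, smul_eq_mul, mul_one] at h2
      omega

lemma count_partition (a : ℕ) (P : Multiset ℕ) :
    (P.filter (a ≤ ·)).card = P.count a + (P.filter (a + 1 ≤ ·)).card := by
  induction P using Multiset.induction_on with
  | empty => simp
  | cons x s ih =>
    simp only [Multiset.filter_cons, Multiset.count_cons, Multiset.card_add]
    split_ifs <;> simp_all <;> omega

lemma multiset_eq_of_filter_card (M N : Multiset ℕ)
    (h : ∀ t, (M.filter (t ≤ ·)).card = (N.filter (t ≤ ·)).card) : M = N := by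
  ext a
  have h1 := count_partition a M
  have h2 := count_partition a N
  have h3 := h a
  have h4 := h (a + 1)
  omega

lemma filter_bind_card (p : ℕ → Prop) [DecidablePred p] (s : Multiset ℕ) (f : ℕ → Multiset ℕ) :
    ((s.bind f).filter p).card = (s.map (fun a => ((f a).filter p).card)).sum := by
  induction s using Multiset.induction_on with
  | empty => simp
  | cons x s ih => simp [Multiset.filter_add, ih]

lemma sum_nat_sub (r : ℕ) (a b : ℕ → ℕ) (h : ∀ i, i < r → b i ≤ a i) :
    ∑ i ∈ Finset.range r, (a i - b i)
      = ∑ i ∈ Finset.range r, a i - ∑ i ∈ Finset.range r, b i := by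
  have key : ∑ i ∈ Finset.range r, (a i - b i) + ∑ i ∈ Finset.range r, b i
      = ∑ i ∈ Finset.range r, a i := by
    rw [← Finset.sum_add_distrib]
    exact Finset.sum_congr rfl fun i hi =>
      Nat.sub_add_cancel (h i (Finset.mem_range.mp hi))
  have hle : ∑ i ∈ Finset.range r, b i ≤ ∑ i ∈ Finset.range r, a i :=
    Finset.sum_le_sum fun i hi => h i (Finset.mem_range.mp hi)
  omega

/-- The multiset {η_k : r ≤ k ≤ λ₀-1} equals the multiset {⌊s m/λ_i⌋ : 1 ≤ s ≤ λ_i - 1, 1 ≤ i ≤ r}. -/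
theorem stmt3 (m r : ℕ) (lam : ℕ → ℕ) (hm : 0 < m) (hr : 0 < r)
    (hlam : ∀ i, i < r → 0 < lam i) (lam0 : ℕ)
    (h0 : lam0 = ∑ i ∈ Finset.range r, lam i) (hrl : r < lam0) :
    (Finset.Ico r lam0).val.map (eta m r lam) =
      (Finset.range r).val.bind
        (fun i => (Finset.Ico 1 (lam i)).val.map (fun s => s * m / lam i)) := by
  apply multiset_eq_of_filter_card
  intro t
  -- LHS card
  have hL : ∀ t : ℕ, 1 ≤ t →
      (((Finset.Ico r lam0).val.map (eta m r lam)).filter (t ≤ ·)).card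
        = lam0 - ∑ i ∈ Finset.range r, athr m (lam i) t := by
    intro t ht
    rw [← Multiset.countP_eq_card_filter, Multiset.countP_map]
    have hrA : r ≤ ∑ i ∈ Finset.range r, athr m (lam i) t := by
      calc r = ∑ _i ∈ Finset.range r, 1 := by simp
        _ ≤ _ := Finset.sum_le_sum fun i hi =>
            one_le_athr hm (hlam i (Finset.mem_range.mp hi)) ht
    have hfe : Multiset.filter (fun a => t ≤ eta m r lam a) (Finset.Ico r lam0).val
        = (Finset.Ico (∑ i ∈ Finset.range r, athr m (lam i) t) lam0).val := by
      rw [Multiset.Nodup.ext ((Finset.Ico r lam0).nodup.filter _) (Finset.Ico _ lam0).nodup]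
      intro k
      rw [Multiset.mem_filter]
      simp only [Finset.mem_val, Finset.mem_Ico, Function.comp]
      constructor
      · rintro ⟨⟨hk1, hk2⟩, hte⟩
        exact ⟨(eta_ge_iff hm hr hlam ht hk1 (by omega)).mp hte, hk2⟩
      · rintro ⟨hk1, hk2⟩
        have hk0 : r ≤ k := le_trans hrA hk1
        exact ⟨⟨hk0, hk2⟩, (eta_ge_iff hm hr hlam ht hk0 (by omega)).mpr hk1⟩
    rw [hfe]
    show (Finset.Ico _ lam0).card = _
    rw [Nat.card_Ico]
  -- RHS inner card
  have hRinner : ∀ t : ℕ, 1 ≤ t → ∀ i, i < r →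
      ((((Finset.Ico 1 (lam i)).val).map (fun s => s * m / lam i)).filter (t ≤ ·)).card
        = lam i - athr m (lam i) t := by
    intro t ht i hi
    rw [← Multiset.countP_eq_card_filter, Multiset.countP_map]
    have hfe : Multiset.filter (fun a => t ≤ a * m / lam i)
          (Finset.Ico 1 (lam i)).val
        = (Finset.Ico (athr m (lam i) t) (lam i)).val := by
      rw [Multiset.Nodup.ext ((Finset.Ico 1 (lam i)).nodup.filter _) (Finset.Ico _ _).nodup]
      intro s
      rw [Multiset.mem_filter]
      simp only [Finset.mem_val, Finset.mem_Ico, Function.comp]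
      constructor
      · rintro ⟨⟨_, hs2⟩, hts⟩
        rw [nat_le_div_iff (hlam i hi), ← athr_le_iff hm] at hts
        exact ⟨hts, hs2⟩
      · rintro ⟨hs1, hs2⟩
        refine ⟨⟨le_trans (one_le_athr hm (hlam i hi) ht) hs1, hs2⟩, ?_⟩
        rw [nat_le_div_iff (hlam i hi), ← athr_le_iff hm]
        exact hs1
    rw [hfe]
    show (Finset.Ico _ _).card = _
    rw [Nat.card_Ico]
  -- RHS card
  have hR : ∀ t : ℕ, 1 ≤ t →
      (((Finset.range r).val.bind
        (fun i => (Finset.Ico 1 (lam i)).val.map (fun s => s * m / lam i))).filter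
          (t ≤ ·)).card
        = lam0 - ∑ i ∈ Finset.range r, athr m (lam i) t := by
    intro t ht
    rw [filter_bind_card]
    have hmapsum : ((Finset.range r).val.map
        (fun i => ((((Finset.Ico 1 (lam i)).val).map
          (fun s => s * m / lam i)).filter (t ≤ ·)).card)).sum
        = ∑ i ∈ Finset.range r, (lam i - athr m (lam i) t) := by
      have : ((Finset.range r).val.map
          (fun i => ((((Finset.Ico 1 (lam i)).val).map
            (fun s => s * m / lam i)).filter (t ≤ ·)).card)).sum
          = ∑ i ∈ Finset.range r,
              ((((Finset.Ico 1 (lam i)).val).map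
                (fun s => s * m / lam i)).filter (t ≤ ·)).card := rfl
      rw [this]
      exact Finset.sum_congr rfl fun i hi => hRinner t ht i (Finset.mem_range.mp hi)
    rw [hmapsum]
    by_cases htm : t ≤ m
    · rw [sum_nat_sub r lam (fun i => athr m (lam i) t)
        (fun i hi => (athr_le_lam_iff hm (hlam i hi) t).mpr htm), h0]
    · push_neg at htm
      have h1 : ∀ i, i < r → lam i < athr m (lam i) t := by
        intro i hi
        have := (athr_le_lam_iff hm (hlam i hi) t).not.mpr (by omega)
        omega
      have h2 : ∑ i ∈ Finset.range r, (lam i - athr m (lam i) t) = 0 := by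
        apply Finset.sum_eq_zero
        intro i hi
        have := h1 i (Finset.mem_range.mp hi)
        omega
      have h3 : lam0 ≤ ∑ i ∈ Finset.range r, athr m (lam i) t := by
        rw [h0]
        exact Finset.sum_le_sum fun i hi => le_of_lt (h1 i (Finset.mem_range.mp hi))
      omega
  rcases Nat.eq_zero_or_pos t with rfl | ht
  · -- t = 0 : filter is everything
    have hall : ∀ (P : Multiset ℕ), P.filter (0 ≤ ·) = P :=
      fun P => Multiset.filter_eq_self.mpr fun x _ => Nat.zero_le x
    rw [hall, hall]
    rw [Multiset.card_map, Multiset.card_bind]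
    have hc1 : Multiset.card (Finset.Ico r lam0).val = lam0 - r := Nat.card_Ico r lam0
    rw [hc1]
    have hc2 : ((Finset.range r).val.map
        (Multiset.card ∘ fun i => (Finset.Ico 1 (lam i)).val.map (fun s => s * m / lam i))).sum
        = ∑ i ∈ Finset.range r, (lam i - 1) := by
      have : ((Finset.range r).val.map
          (Multiset.card ∘ fun i => (Finset.Ico 1 (lam i)).val.map (fun s => s * m / lam i))).sum
          = ∑ i ∈ Finset.range r,
              Multiset.card ((Finset.Ico 1 (lam i)).val.map (fun s => s * m / lam i)) := rfl
      rw [this]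
      refine Finset.sum_congr rfl fun i hi => ?_
      rw [Multiset.card_map]
      show (Finset.Ico 1 (lam i)).card = _
      rw [Nat.card_Ico]
    rw [hc2, sum_nat_sub r lam (fun _ => 1) (fun i hi => hlam i hi)]
    simp [h0]
  · rw [hL t ht, hR t ht]
end

section
/- Let r, m, λ₁,…,λ_r be positive integers, λ₀ = ∑_{i=1}^r λ_i, r < λ₀, and define η_k as in the multiset lemma. Then ∑_{k=r}^{λ₀-1} η_k = ((m-1)(λ₀ - r) - r + ∑_{i=1}^r gcd(m, λ_i)) / 2. -/
open Finset

namespace Stmt4Aux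

/-- `gg m l t = max 1 ⌈t l / m⌉` -/
def gg (m l t : ℕ) : ℕ := max 1 ((t * l + m - 1) / m)

lemma gg_le_iff {m : ℕ} (hm : 0 < m) (l s t : ℕ) :
    gg m l t ≤ s ↔ 1 ≤ s ∧ t * l ≤ s * m := by
  unfold gg
  rw [max_le_iff, Nat.div_le_iff_le_mul_add_pred hm]
  have : s * m = m * s := Nat.mul_comm _ _
  omega

lemma one_le_gg {m l t : ℕ} : 1 ≤ gg m l t := le_max_left _ _

lemma le_gg_mul {m : ℕ} (hm : 0 < m) (l t : ℕ) : t * l ≤ gg m l t * m :=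
  ((gg_le_iff hm l _ t).mp le_rfl).2

lemma gg_mono {m : ℕ} (hm : 0 < m) (l : ℕ) {t t' : ℕ} (h : t ≤ t') :
    gg m l t ≤ gg m l t' :=
  (gg_le_iff hm l _ t).mpr ⟨one_le_gg,
    le_trans (Nat.mul_le_mul_right l h) (le_gg_mul hm l t')⟩

lemma gg_le_lam {m : ℕ} (hm : 0 < m) {l : ℕ} (hl : 0 < l) {t : ℕ} (ht : t ≤ m) :
    gg m l t ≤ l :=
  (gg_le_iff hm l l t).mpr ⟨hl, by
    calc t * l ≤ m * l := Nat.mul_le_mul_right l ht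
    _ = l * m := Nat.mul_comm _ _⟩

/-- `ff` = sum of `gg` -/
def ff (m r : ℕ) (lam : ℕ → ℕ) (t : ℕ) : ℕ := ∑ i ∈ Finset.range r, gg m (lam i) t

lemma ff_mono {m r : ℕ} (hm : 0 < m) (lam : ℕ → ℕ) {t t' : ℕ} (h : t ≤ t') :
    ff m r lam t ≤ ff m r lam t' :=
  Finset.sum_le_sum fun i _ => gg_mono hm (lam i) h

lemma r_le_ff {m r : ℕ} (lam : ℕ → ℕ) (t : ℕ) : r ≤ ff m r lam t := by
  calc r = ∑ _i ∈ Finset.range r, 1 := by simp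
  _ ≤ _ := Finset.sum_le_sum fun i _ => one_le_gg

lemma ff_le {m r : ℕ} (hm : 0 < m) {lam : ℕ → ℕ} (hlam : ∀ i, i < r → 0 < lam i)
    {t : ℕ} (ht : t ≤ m) : ff m r lam t ≤ ∑ i ∈ Finset.range r, lam i :=
  Finset.sum_le_sum fun i hi => gg_le_lam hm (hlam i (mem_range.mp hi)) ht

lemma ff_zero {m r : ℕ} (hm : 0 < m) (lam : ℕ → ℕ) : ff m r lam 0 = r := by
  unfold ff
  have : ∀ l, gg m l 0 = 1 := by
    intro l
    unfold gg
    rw [Nat.zero_mul, Nat.zero_add, Nat.div_eq_of_lt (by omega), max_eq_left (by omega)]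
  simp [this]

/-- fill lemma -/
lemma fill (a b : ℕ → ℕ) : ∀ (n k : ℕ), (∀ i, i < n → a i ≤ b i) →
    (∑ i ∈ Finset.range n, a i) ≤ k → k ≤ ∑ i ∈ Finset.range n, b i →
    ∃ s : ℕ → ℕ, (∀ i, i < n → a i ≤ s i ∧ s i ≤ b i) ∧ ∑ i ∈ Finset.range n, s i = k := by
  intro n
  induction n with
  | zero =>
    intro k _ h1 h2
    simp only [Finset.range_zero, Finset.sum_empty] at h1 h2 ⊢
    exact ⟨fun _ => 0, fun i hi => absurd hi (by omega), by omega⟩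
  | succ n ih =>
    intro k hab h1 h2
    rw [Finset.sum_range_succ] at h1 h2
    have hAB : ∑ i ∈ Finset.range n, a i ≤ ∑ i ∈ Finset.range n, b i :=
      Finset.sum_le_sum fun i hi => hab i (by have := mem_range.mp hi; omega)
    have habn := hab n (by omega)
    obtain ⟨sn, han, hbn, h3, h4, h5⟩ :
        ∃ sn, a n ≤ sn ∧ sn ≤ b n ∧ (∑ i ∈ Finset.range n, a i) ≤ k - sn ∧
          k - sn ≤ ∑ i ∈ Finset.range n, b i ∧ sn ≤ k :=
      ⟨min (b n) (k - ∑ i ∈ Finset.range n, a i), by omega⟩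
    obtain ⟨s0, hs0, hsum0⟩ := ih (k - sn) (fun i hi => hab i (by omega)) h3 h4
    refine ⟨fun i => if i = n then sn else s0 i, ?_, ?_⟩
    · intro i hi
      by_cases h : i = n
      · subst h; simp only [if_pos rfl]; exact ⟨han, hbn⟩
      · simp only [if_neg h]; exact hs0 i (by omega)
    · rw [Finset.sum_range_succ, if_pos rfl,
        Finset.sum_congr rfl (fun i hi => if_neg (by have := mem_range.mp hi; omega)), hsum0]
      omega


section Eta

variable {m r : ℕ} {lam : ℕ → ℕ}

/-- the set whose sSup is eta -/
def etaSet (m r : ℕ) (lam : ℕ → ℕ) (k : ℕ) : Set ℕ :=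
  {v : ℕ | ∃ s : ℕ → ℕ, (∀ i, i < r → 1 ≤ s i ∧ s i ≤ lam i) ∧
      (∑ i ∈ Finset.range r, s i) = k ∧ v = sInf {w : ℕ | ∃ i, i < r ∧ w = s i * m / lam i}}

lemma eta_elem (hm : 0 < m) (hr : 0 < r) (hlam : ∀ i, i < r → 0 < lam i) {k v : ℕ}
    (hk : k < ∑ i ∈ Finset.range r, lam i) (hv : v ∈ etaSet m r lam k) :
    v < m ∧ ff m r lam v ≤ k := by
  obtain ⟨s, hs, hsum, rfl⟩ := hv
  have hlb : ∀ i, i < r → sInf {w : ℕ | ∃ i, i < r ∧ w = s i * m / lam i} ≤ s i * m / lam i :=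
    fun i hi => Nat.sInf_le ⟨i, hi, rfl⟩
  set v := sInf {w : ℕ | ∃ i, i < r ∧ w = s i * m / lam i} with hvdef
  obtain ⟨j, hjr, hjl⟩ : ∃ j, j < r ∧ s j < lam j := by
    by_contra h
    push_neg at h
    have : ∑ i ∈ Finset.range r, lam i ≤ ∑ i ∈ Finset.range r, s i :=
      Finset.sum_le_sum fun i hi => h i (mem_range.mp hi)
    omega
  constructor
  · refine lt_of_le_of_lt (hlb j hjr) ?_
    rw [Nat.div_lt_iff_lt_mul (hlam j hjr)]
    calc s j * m < lam j * m := Nat.mul_lt_mul_of_lt_of_le hjl le_rfl hm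
    _ = m * lam j := Nat.mul_comm _ _
  · rw [← hsum]
    refine Finset.sum_le_sum fun i hi => ?_
    have hi' := mem_range.mp hi
    refine (gg_le_iff hm _ _ _).mpr ⟨(hs i hi').1, ?_⟩
    have := hlb i hi'
    rwa [Nat.le_div_iff_mul_le (hlam i hi')] at this

lemma eta_build (hm : 0 < m) (hr : 0 < r) (hlam : ∀ i, i < r → 0 < lam i) {k t : ℕ}
    (hk : k ≤ ∑ i ∈ Finset.range r, lam i) (ht : t ≤ m) (hft : ff m r lam t ≤ k) :
    ∃ v ∈ etaSet m r lam k, t ≤ v := by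
  obtain ⟨s, hs, hsum⟩ := fill (fun i => gg m (lam i) t) lam r k
    (fun i hi => gg_le_lam hm (hlam i hi) ht) hft hk
  refine ⟨_, ⟨s, fun i hi => ⟨le_trans one_le_gg (hs i hi).1, (hs i hi).2⟩, hsum, rfl⟩, ?_⟩
  refine le_csInf ⟨_, 0, hr, rfl⟩ ?_
  rintro w ⟨i, hi, rfl⟩
  rw [Nat.le_div_iff_mul_le (hlam i hi)]
  calc t * lam i ≤ gg m (lam i) t * m := le_gg_mul hm _ _
  _ ≤ s i * m := Nat.mul_le_mul_right m (hs i hi).1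

lemma etaSet_nonempty (hm : 0 < m) (hr : 0 < r) (hlam : ∀ i, i < r → 0 < lam i) {k : ℕ}
    (hk1 : r ≤ k) (hk : k ≤ ∑ i ∈ Finset.range r, lam i) : (etaSet m r lam k).Nonempty := by
  obtain ⟨v, hv, -⟩ := eta_build hm hr hlam hk (Nat.zero_le m)
    (by rw [ff_zero hm]; exact hk1)
  exact ⟨v, hv⟩

lemma etaSet_bdd (hm : 0 < m) (hr : 0 < r) (hlam : ∀ i, i < r → 0 < lam i) {k : ℕ}
    (hk : k < ∑ i ∈ Finset.range r, lam i) : BddAbove (etaSet m r lam k) :=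
  ⟨m, fun v hv => (eta_elem hm hr hlam hk hv).1.le⟩

lemma eta_eq_card (hm : 0 < m) (hr : 0 < r) (hlam : ∀ i, i < r → 0 < lam i) {k : ℕ}
    (hk1 : r ≤ k) (hk2 : k < ∑ i ∈ Finset.range r, lam i) :
    eta m r lam k = ((Finset.Ico 1 m).filter (fun t => ff m r lam t ≤ k)).card := by
  have heta : eta m r lam k = sSup (etaSet m r lam k) := rfl
  rw [heta]
  set F := (Finset.Ico 1 m).filter (fun t => ff m r lam t ≤ k) with hF
  apply le_antisymm
  · refine csSup_le (etaSet_nonempty hm hr hlam hk1 hk2.le) fun v hv => ?_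
    obtain ⟨hvm, hfv⟩ := eta_elem hm hr hlam hk2 hv
    calc v = (Finset.Ico 1 (v+1)).card := by simp
    _ ≤ F.card := by
        refine Finset.card_le_card fun t htv => ?_
        have htv' := Finset.mem_Ico.mp htv
        refine Finset.mem_filter.mpr ⟨Finset.mem_Ico.mpr ⟨htv'.1, by omega⟩, ?_⟩
        exact le_trans (ff_mono hm lam (by omega)) hfv
  · rcases Nat.eq_zero_or_pos F.card with h0 | hc
    · rw [h0]; exact Nat.zero_le _
    · have hFne : F.Nonempty := Finset.card_pos.mp hc
      set tm := F.max' hFne with htm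
      have htmF := F.max'_mem hFne
      have htmIco := Finset.mem_Ico.mp (Finset.mem_filter.mp htmF).1
      have htmle : ff m r lam tm ≤ k := (Finset.mem_filter.mp htmF).2
      have hFeq : F = Finset.Ico 1 (tm + 1) := by
        ext t
        simp only [hF, Finset.mem_filter, Finset.mem_Ico]
        constructor
        · rintro ⟨⟨h1, h2⟩, h3⟩
          exact ⟨h1, by
            have := F.le_max' t (Finset.mem_filter.mpr ⟨Finset.mem_Ico.mpr ⟨h1, h2⟩, h3⟩)
            omega⟩
        · rintro ⟨h1, h2⟩
          exact ⟨⟨h1, by omega⟩, le_trans (ff_mono hm lam (by omega)) htmle⟩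
      have hcard : F.card = tm := by rw [hFeq]; simp
      obtain ⟨v, hv, hvt⟩ := eta_build hm hr hlam hk2.le (by omega) htmle
      calc F.card = tm := hcard
      _ ≤ v := hvt
      _ ≤ sSup (etaSet m r lam k) := le_csSup (etaSet_bdd hm hr hlam hk2) hv

end Eta

section Index

lemma gg_eq_ceil {m l : ℕ} (hm : 0 < m) (hl : 0 < l) {t : ℕ} (ht : 1 ≤ t) :
    gg m l t = (t * l + m - 1) / m := by
  unfold gg
  refine max_eq_right ?_
  rw [Nat.one_le_div_iff hm]
  have : 1 * 1 ≤ t * l := Nat.mul_le_mul ht hl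
  omega

lemma ceil_add {m l : ℕ} (hm : 0 < m) (hl : 0 < l) {t : ℕ} (ht1 : 1 ≤ t) (ht2 : t < m) :
    gg m l t + gg m l (m - t) + (if m ∣ t * l then 1 else 0) = l + 1 := by
  rw [gg_eq_ceil hm hl ht1, gg_eq_ceil hm hl (by omega : 1 ≤ m - t)]
  set x := t * l with hxd
  set y := (m - t) * l with hyd
  set q := x / m with hqd
  have hx : m * q + x % m = x := Nat.div_add_mod x m
  set ρ := x % m with hrd
  have hρ : ρ < m := Nat.mod_lt _ hm
  have hxy : x + y = m * l := by
    rw [hxd, hyd, ← Nat.add_mul]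
    congr 1
    omega
  have hq : q < l := by
    rw [hqd, Nat.div_lt_iff_lt_mul hm]
    have h1 : t * l < m * l := Nat.mul_lt_mul_of_lt_of_le ht2 le_rfl hl
    have h2 : l * m = m * l := Nat.mul_comm _ _
    omega
  by_cases hd : ρ = 0
  · rw [if_pos (Nat.dvd_of_mod_eq_zero (by omega))]
    have e1 : (x + m - 1) / m = q := by
      rw [show x + m - 1 = m * q + (m - 1) by omega, Nat.mul_add_div hm,
        Nat.div_eq_of_lt (by omega)]
      omega
    have hy : y = m * (l - q) := by
      have h3 : m * q + m * (l - q) = m * l := by rw [← Nat.mul_add]; congr 1; omega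
      omega
    have e2 : (y + m - 1) / m = l - q := by
      rw [hy, show m * (l - q) + m - 1 = m * (l - q) + (m - 1) by omega,
        Nat.mul_add_div hm, Nat.div_eq_of_lt (by omega)]
      omega
    rw [e1, e2]
    omega
  · rw [if_neg (fun h => hd (by rw [hrd]; exact Nat.mod_eq_zero_of_dvd h))]
    have e1 : (x + m - 1) / m = q + 1 := by
      have hmq : m * (q + 1) = m * q + m := by ring
      rw [show x + m - 1 = m * (q + 1) + (ρ - 1) by omega, Nat.mul_add_div hm,
        Nat.div_eq_of_lt (by omega)]
    have hy : y = m * (l - q - 1) + (m - ρ) := by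
      have h3 : m * (l - q - 1) + m * (q + 1) = m * l := by rw [← Nat.mul_add]; congr 1; omega
      have hmq : m * (q + 1) = m * q + m := by ring
      omega
    have e2 : (y + m - 1) / m = l - q := by
      have h2 : m * (l - q - 1) + m * 1 = m * (l - q) := by
        rw [← Nat.mul_add]; congr 1; omega
      rw [show y + m - 1 = m * (l - q) + (m - ρ - 1) by omega, Nat.mul_add_div hm,
        Nat.div_eq_of_lt (by omega)]
      omega
    rw [e1, e2]
    omega


lemma sum_reflect {m : ℕ} (h : ℕ → ℕ) :
    ∑ t ∈ Finset.Ico 1 m, h (m - t) = ∑ t ∈ Finset.Ico 1 m, h t := by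
  refine Finset.sum_nbij' (fun t => m - t) (fun t => m - t) ?_ ?_ ?_ ?_ ?_
  · intro a ha; simp only [Finset.mem_Ico] at ha ⊢; omega
  · intro a ha; simp only [Finset.mem_Ico] at ha ⊢; omega
  · intro a ha; simp only [Finset.mem_Ico] at ha; omega
  · intro a ha; simp only [Finset.mem_Ico] at ha; omega
  · intro a _; rfl

lemma dvd_iff_aux {m l : ℕ} (hm : 0 < m) (hl : 0 < l) (t : ℕ) :
    m ∣ t * l ↔ (m / Nat.gcd m l) ∣ t := by
  set g := Nat.gcd m l with hg
  have hgpos : 0 < g := Nat.gcd_pos_of_pos_left l hm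
  have hmg : g * (m / g) = m := Nat.mul_div_cancel' (Nat.gcd_dvd_left m l)
  have hlg : g * (l / g) = l := Nat.mul_div_cancel' (Nat.gcd_dvd_right m l)
  have hco : Nat.Coprime (m / g) (l / g) := Nat.coprime_div_gcd_div_gcd hgpos
  constructor
  · intro h
    have htl : t * l = g * (t * (l / g)) := by
      conv_lhs => rw [← hlg]
      ring
    rw [htl, ← hmg] at h
    exact hco.dvd_of_dvd_mul_right ((Nat.mul_dvd_mul_iff_left hgpos).mp h)
  · intro h
    have h2 : g * (m / g) ∣ g * t := mul_dvd_mul_left g h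
    rw [hmg] at h2
    have h3 : m ∣ g * t * (l / g) := Dvd.dvd.mul_right h2 _
    have h4 : g * t * (l / g) = t * l := by
      conv_rhs => rw [← hlg]
      ring
    rwa [h4] at h3

lemma dvd_card {m l : ℕ} (hm : 0 < m) (hl : 0 < l) :
    ((Finset.Ico 1 m).filter (fun t => m ∣ t * l)).card = Nat.gcd m l - 1 := by
  set g := Nat.gcd m l with hgd
  set d := m / g with hdd
  have hgpos : 0 < g := Nat.gcd_pos_of_pos_left l hm
  have hdg : d * g = m := Nat.div_mul_cancel (Nat.gcd_dvd_left m l)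
  have hdpos : 0 < d := by
    rcases Nat.eq_zero_or_pos d with h | h
    · exfalso; rw [h, Nat.zero_mul] at hdg; omega
    · exact h
  have h1 : (Finset.Ico 1 m).filter (fun t => m ∣ t * l)
      = (Finset.Ioc 0 (m - 1)).filter (fun t => d ∣ t) := by
    ext t
    simp only [Finset.mem_filter, Finset.mem_Ico, Finset.mem_Ioc, dvd_iff_aux hm hl, ← hgd, ← hdd]
    omega
  rw [h1, Nat.Ioc_filter_dvd_card_eq_div]
  have h2 : d * (g - 1) + d * 1 = d * g := by rw [← Nat.mul_add]; congr 1; omega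
  rw [show m - 1 = d * (g - 1) + (d - 1) by omega, Nat.mul_add_div hdpos,
    Nat.div_eq_of_lt (by omega)]
  omega

lemma index_sum {m l : ℕ} (hm : 0 < m) (hl : 0 < l) :
    2 * (∑ t ∈ Finset.Ico 1 m, gg m l t) + Nat.gcd m l + 1 = (l - 1) * (m - 1) + 2 * m := by
  have h1 : ∑ t ∈ Finset.Ico 1 m, (gg m l t + gg m l (m - t) + (if m ∣ t * l then 1 else 0))
      = ∑ _t ∈ Finset.Ico 1 m, (l + 1) :=
    Finset.sum_congr rfl fun t ht => by
      have := Finset.mem_Ico.mp ht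
      exact ceil_add hm hl this.1 this.2
  rw [Finset.sum_add_distrib, Finset.sum_add_distrib, sum_reflect (gg m l),
    ← Finset.card_filter, dvd_card hm hl, Finset.sum_const, Nat.card_Ico, smul_eq_mul] at h1
  have hg1 : 1 ≤ Nat.gcd m l := Nat.gcd_pos_of_pos_left l hm
  obtain ⟨m', rfl⟩ : ∃ m', m = m' + 1 := ⟨m - 1, by omega⟩
  obtain ⟨l', rfl⟩ : ∃ l', l = l' + 1 := ⟨l - 1, by omega⟩
  simp only [Nat.add_sub_cancel] at h1 ⊢
  have hx : m' * (l' + 1 + 1) = l' * m' + 2 * m' := by ring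
  omega


lemma sum_eta {m r : ℕ} {lam : ℕ → ℕ} (hm : 0 < m) (hr : 0 < r)
    (hlam : ∀ i, i < r → 0 < lam i) {lam0 : ℕ}
    (h0 : lam0 = ∑ i ∈ Finset.range r, lam i) :
    ∑ k ∈ Finset.Ico r lam0, eta m r lam k
      = ∑ t ∈ Finset.Ico 1 m, (lam0 - ff m r lam t) := by
  have h1 : ∀ k ∈ Finset.Ico r lam0, eta m r lam k
      = ∑ t ∈ Finset.Ico 1 m, if ff m r lam t ≤ k then 1 else 0 := by
    intro k hk
    have hk' := Finset.mem_Ico.mp hk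
    rw [eta_eq_card hm hr hlam hk'.1 (h0 ▸ hk'.2), Finset.card_filter]
  rw [Finset.sum_congr rfl h1, Finset.sum_comm]
  refine Finset.sum_congr rfl fun t _ => ?_
  rw [← Finset.card_filter]
  have hrf := r_le_ff (m := m) (r := r) lam t
  have h2 : (Finset.Ico r lam0).filter (fun k => ff m r lam t ≤ k)
      = Finset.Ico (ff m r lam t) lam0 := by
    ext k
    simp only [Finset.mem_filter, Finset.mem_Ico]
    omega
  rw [h2, Nat.card_Ico]

end Index

end Stmt4Aux

/-- ∑_{k=r}^{λ₀-1} η_k = ((m-1)(λ₀-r) - r + ∑ gcd(m,λ_i))/2 -/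
theorem stmt4 (m r : ℕ) (lam : ℕ → ℕ) (hm : 0 < m) (hr : 0 < r)
    (hlam : ∀ i, i < r → 0 < lam i) (lam0 : ℕ)
    (h0 : lam0 = ∑ i ∈ Finset.range r, lam i) (hrl : r < lam0) :
    2 * ∑ k ∈ Finset.Ico r lam0, eta m r lam k =
      (m - 1) * (lam0 - r) + (∑ i ∈ Finset.range r, Nat.gcd m (lam i)) - r := by
  open Stmt4Aux in
  rw [Stmt4Aux.sum_eta hm hr hlam h0]
  have hffle : ∀ t ∈ Finset.Ico 1 m, Stmt4Aux.ff m r lam t ≤ lam0 := fun t ht =>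
    h0 ▸ Stmt4Aux.ff_le hm hlam (le_of_lt (Finset.mem_Ico.mp ht).2)
  have h2 : ∑ t ∈ Finset.Ico 1 m, (lam0 - Stmt4Aux.ff m r lam t)
      + ∑ t ∈ Finset.Ico 1 m, Stmt4Aux.ff m r lam t = (m - 1) * lam0 := by
    rw [← Finset.sum_add_distrib,
      Finset.sum_congr rfl (fun t ht => Nat.sub_add_cancel (hffle t ht)),
      Finset.sum_const, Nat.card_Ico, smul_eq_mul]
  have h3 : ∑ t ∈ Finset.Ico 1 m, Stmt4Aux.ff m r lam t
      = ∑ i ∈ Finset.range r, ∑ t ∈ Finset.Ico 1 m, Stmt4Aux.gg m (lam i) t := by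
    unfold Stmt4Aux.ff
    exact Finset.sum_comm
  have h4 : ∀ i ∈ Finset.range r,
      2 * (∑ t ∈ Finset.Ico 1 m, Stmt4Aux.gg m (lam i) t) + Nat.gcd m (lam i) + 1
        = (lam i - 1) * (m - 1) + 2 * m :=
    fun i hi => Stmt4Aux.index_sum hm (hlam i (Finset.mem_range.mp hi))
  have h5 := Finset.sum_congr rfl h4
  rw [Finset.sum_add_distrib, Finset.sum_add_distrib, ← Finset.mul_sum,
    Finset.sum_const, Finset.card_range, smul_eq_mul, Nat.mul_one,
    Finset.sum_add_distrib, ← Finset.sum_mul, Finset.sum_const, Finset.card_range,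
    smul_eq_mul] at h5
  -- h5 : 2 * T + G + r = A * (m-1) + r * (2*m)
  have h6 : (∑ i ∈ Finset.range r, (lam i - 1)) + r = lam0 := by
    rw [h0]
    have : ∀ i ∈ Finset.range r, lam i - 1 + 1 = lam i := fun i hi =>
      Nat.sub_add_cancel (hlam i (Finset.mem_range.mp hi))
    calc (∑ i ∈ Finset.range r, (lam i - 1)) + r
        = (∑ i ∈ Finset.range r, (lam i - 1)) + ∑ _i ∈ Finset.range r, 1 := by simp
      _ = ∑ i ∈ Finset.range r, (lam i - 1 + 1) := by rw [← Finset.sum_add_distrib]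
      _ = ∑ i ∈ Finset.range r, lam i := Finset.sum_congr rfl this
  have hG : r ≤ ∑ i ∈ Finset.range r, Nat.gcd m (lam i) := by
    calc r = ∑ _i ∈ Finset.range r, 1 := by simp
      _ ≤ _ := Finset.sum_le_sum fun i hi => Nat.gcd_pos_of_pos_left _ hm
  have hA : (m - 1) * lam0 = (m - 1) * (lam0 - r) + (m - 1) * r := by
    rw [← Nat.mul_add]
    congr 1
    omega
  have hB : (∑ i ∈ Finset.range r, (lam i - 1)) * (m - 1) = (m - 1) * (lam0 - r) := by
    rw [show (∑ i ∈ Finset.range r, (lam i - 1)) = lam0 - r by omega, Nat.mul_comm]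
  have hC : (m - 1) * r + 1 * r = m * r := by
    rw [← Nat.add_mul]
    congr 1
    omega
  have hD : r * (2 * m) = 2 * (m * r) := by ring
  omega
end

section
/- Let H be a numerical semigroup with gap set G = ℕ \ H of cardinality g (the genus), and let n be a nonzero element of H. If S ⊆ H has n elements forming a complete set of representatives of the residue classes modulo n, then S equals the Apéry set Ap(H,n) = {s ∈ H : s - n ∉ H} if and only if ∑_{a∈S} ⌊a/n⌋ = g. -/
open Finset

/-- Apéry set criterion: S = Ap(H,n) iff ∑_{a∈S} ⌊a/n⌋ equals the genus. -/
theorem stmt7 (H : Set ℕ) (hH : IsNumericalSemigroup H) (n : ℕ) (hn : n ∈ H) (hn0 : n ≠ 0)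
    (S : Finset ℕ) (hS : ↑S ⊆ H) (hcard : S.card = n)
    (hrep : ∀ a ∈ S, ∀ b ∈ S, a % n = b % n → a = b) :
    (↑S = {s ∈ H | s < n ∨ s - n ∉ H}) ↔
      ∑ a ∈ S, a / n = Set.ncard {x : ℕ | x ∉ H} := by
  classical
  obtain ⟨h0, hadd, hfin⟩ := hH
  have hn1 : 0 < n := Nat.pos_of_ne_zero hn0
  -- all large numbers are in H
  obtain ⟨N, hN⟩ := hfin.bddAbove
  have hbig : ∀ x, N < x → x ∈ H := by
    intro x hx
    by_contra hxH
    exact absurd (hN hxH) (not_le.mpr hx)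
  -- the Apéry elements
  set w : ℕ → ℕ := fun c => sInf {x | x ∈ H ∧ x % n = c} with hw
  have hne : ∀ c, c < n → {x | x ∈ H ∧ x % n = c}.Nonempty := by
    intro c hc
    refine ⟨c + (N + 1) * n, hbig _ ?_, ?_⟩
    · have : N + 1 ≤ (N + 1) * n := Nat.le_mul_of_pos_right _ hn1
      omega
    · simp [Nat.add_mul_mod_self_right, Nat.mod_eq_of_lt hc]
  have hwmem : ∀ c, c < n → w c ∈ H ∧ w c % n = c := fun c hc => Nat.sInf_mem (hne c hc)
  have hwle : ∀ c, c < n → ∀ x, x ∈ H → x % n = c → w c ≤ x := by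
    intro c hc x hx hxc
    exact Nat.sInf_le ⟨hx, hxc⟩
  have hmul : ∀ x ∈ H, ∀ k, x + n * k ∈ H := by
    intro x hx k
    induction k with
    | zero => simpa using hx
    | succ k ih =>
        have h2 := hadd _ ih n hn
        have : x + n * k + n = x + n * (k + 1) := by ring
        rwa [this] at h2
  have habove : ∀ c, c < n → ∀ x, x % n = c → w c ≤ x → x ∈ H := by
    intro c hc x hxc hle
    obtain ⟨k, hk⟩ := Nat.le.dest (Nat.div_le_div_right (c := n) hle)
    have e1 := Nat.div_add_mod x n
    have e2 := Nat.div_add_mod (w c) n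
    rw [hxc] at e1
    rw [(hwmem c hc).2] at e2
    rw [← hk, Nat.mul_add] at e1
    have ex : x = w c + n * k := by omega
    rw [ex]
    exact hmul _ (hwmem c hc).1 k
  have hgap : ∀ c, c < n → ∀ x, x % n = c → (x ∉ H ↔ x < w c) := by
    intro c hc x hxc
    constructor
    · intro hxH
      by_contra hlt
      push_neg at hlt
      exact hxH (habove c hc x hxc hlt)
    · intro hlt hxH
      exact absurd (hwle c hc x hxH hxc) (not_le.mpr hlt)
  -- minimality characterization of Apéry membership
  have hApmin : ∀ s, s ∈ H → (s < n ∨ s - n ∉ H) → s = w (s % n) := by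
    intro s hsH hap
    have hc : s % n < n := Nat.mod_lt _ hn1
    have hle : w (s % n) ≤ s := hwle _ hc s hsH rfl
    rcases eq_or_lt_of_le hle with h | h
    · exact h.symm
    · exfalso
      -- s > w c, same class, so s ≥ w c + n
      have e1 := Nat.div_add_mod s n
      have e2 := Nat.div_add_mod (w (s % n)) n
      rw [(hwmem _ hc).2] at e2
      have hdlt : w (s % n) / n < s / n := by
        by_contra hd
        push_neg at hd
        have := Nat.mul_le_mul_left n hd
        omega
      have := Nat.mul_le_mul_left n (Nat.succ_le_of_lt hdlt)
      rw [Nat.mul_succ] at this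
      have hns : w (s % n) + n ≤ s := by omega
      rcases hap with h1 | h1
      · omega
      · apply h1
        apply habove _ hc
        · rw [← Nat.mod_eq_sub_mod (by omega)]
        · omega
  have hApw : ∀ s, s = w (s % n) → s ∈ H → s ∈ {s ∈ H | s < n ∨ s - n ∉ H} := by
    intro s hsw hsH
    have hc : s % n < n := Nat.mod_lt _ hn1
    refine ⟨hsH, ?_⟩
    by_contra hcon
    push_neg at hcon
    obtain ⟨hns, hsnH⟩ := hcon
    have hmod : (s - n) % n = s % n := (Nat.mod_eq_sub_mod hns).symm
    have := hwle _ hc (s - n) hsnH hmod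
    omega
  -- the genus as a sum
  set T := hfin.toFinset with hT
  have hcardT : Set.ncard {x : ℕ | x ∉ H} = T.card :=
    Set.ncard_eq_toFinset_card _ hfin
  have hfiberwise : T.card = ∑ c ∈ Finset.range n, (T.filter (fun x => x % n = c)).card :=
    Finset.card_eq_sum_card_fiberwise (fun x _ => Finset.mem_range.mpr (Nat.mod_lt x hn1))
  have hfiber : ∀ c ∈ Finset.range n, (T.filter (fun x => x % n = c)).card = w c / n := by
    intro c hcr
    have hc := Finset.mem_range.mp hcr
    have himeq : T.filter (fun x => x % n = c) = (Finset.range (w c / n)).image (fun j => c + n * j) := by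
      ext x
      simp only [Finset.mem_filter, Finset.mem_image, Finset.mem_range,
        Set.Finite.mem_toFinset, Set.mem_setOf_eq, hT]
      constructor
      · rintro ⟨hxH, hxc⟩
        have hlt := (hgap c hc x hxc).mp hxH
        have e1 := Nat.div_add_mod x n
        have e2 := Nat.div_add_mod (w c) n
        rw [hxc] at e1
        rw [(hwmem c hc).2] at e2
        refine ⟨x / n, ?_, by omega⟩
        by_contra hj
        push_neg at hj
        have := Nat.mul_le_mul_left n hj
        omega
      · rintro ⟨j, hj, rfl⟩
        have e2 := Nat.div_add_mod (w c) n
        rw [(hwmem c hc).2] at e2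
        have := Nat.mul_le_mul_left n (Nat.succ_le_of_lt hj)
        rw [Nat.mul_succ] at this
        have hxc : (c + n * j) % n = c := by
          rw [Nat.add_mul_mod_self_left, Nat.mod_eq_of_lt hc]
        exact ⟨(hgap c hc _ hxc).mpr (by omega), hxc⟩
    rw [himeq, Finset.card_image_of_injective, Finset.card_range]
    intro a b hab
    exact Nat.eq_of_mul_eq_mul_left hn1 (Nat.add_left_cancel hab)
  have hgenus : Set.ncard {x : ℕ | x ∉ H} = ∑ c ∈ Finset.range n, w c / n := by
    rw [hcardT, hfiberwise]
    exact Finset.sum_congr rfl hfiber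
  -- S maps bijectively to residues
  have hinj : Set.InjOn (fun a => a % n) ↑S := fun a ha b hb h => hrep a ha b hb h
  have himg : S.image (fun a => a % n) = Finset.range n := by
    apply Finset.eq_of_subset_of_card_le
    · intro c hc
      simp only [Finset.mem_image] at hc
      obtain ⟨a, _, rfl⟩ := hc
      exact Finset.mem_range.mpr (Nat.mod_lt a hn1)
    · rw [Finset.card_range, Finset.card_image_of_injOn hinj, hcard]
  have hsum_w : ∑ c ∈ Finset.range n, w c / n = ∑ a ∈ S, w (a % n) / n := by
    rw [← himg, Finset.sum_image (fun a ha b hb h => hrep a ha b hb h)]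
  -- termwise inequality
  have hterm : ∀ a ∈ S, w (a % n) / n ≤ a / n := by
    intro a ha
    exact Nat.div_le_div_right (hwle _ (Nat.mod_lt a hn1) a (hS ha) rfl)
  have hkey : (∀ a ∈ S, a = w (a % n)) ↔ ∑ a ∈ S, a / n = Set.ncard {x : ℕ | x ∉ H} := by
    rw [hgenus, hsum_w]
    constructor
    · intro h
      exact Finset.sum_congr rfl fun a ha => by rw [← h a ha]
    · intro h
      have := (Finset.sum_eq_sum_iff_of_le hterm).mp h.symm
      intro a ha
      have hda := (this a ha).symm
      have hc : a % n < n := Nat.mod_lt a hn1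
      have e1 := Nat.div_add_mod a n
      have e2 := Nat.div_add_mod (w (a % n)) n
      rw [(hwmem _ hc).2] at e2
      rw [hda] at e1
      omega
  rw [← hkey]
  constructor
  · intro hSAp a ha
    have : a ∈ {s ∈ H | s < n ∨ s - n ∉ H} := hSAp ▸ (Finset.mem_coe.mpr ha)
    exact hApmin a this.1 this.2
  · intro hmin
    ext s
    simp only [Finset.mem_coe]
    constructor
    · intro hs
      exact hApw s (hmin s hs) (hS hs)
    · intro hs
      have hsw := hApmin s hs.1 hs.2
      have hc : s % n ∈ Finset.range n := Finset.mem_range.mpr (Nat.mod_lt s hn1)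
      rw [← himg, Finset.mem_image] at hc
      obtain ⟨a, ha, hamod⟩ := hc
      have : a = s := by
        rw [hmin a ha, hamod, ← hsw]
      rwa [← this]
end

section
/- Let m, r, λ₀ be positive integers with gcd(m,λ₀)=1 and r ≤ λ₀, and for k ∈ ℕ₀ set η_k = 0 if 0 ≤ k < r, η_k = m-1 if k ≥ λ₀, and η_k as in the multiset lemma for r ≤ k ≤ λ₀-1; set ε_k = m·k - λ₀·(η_k + 1). If η_k + η_{r+λ₀-1-k} = m, then ε_k + ε_{r+λ₀-1-k} = ε_{r-1} - λ₀ and ε_{r-1} > ε_k. -/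
open Finset

lemma eta_mul_le (m r : ℕ) (lam : ℕ → ℕ) (hr : 1 ≤ r) (hlam : ∀ i, i < r → 1 ≤ lam i)
    (lam0 : ℕ) (h0 : lam0 = ∑ i ∈ Finset.range r, lam i) (j : ℕ) :
    lam0 * eta m r lam j ≤ m * j := by
  have hl0 : 0 < lam0 := by
    rw [h0]
    have : 0 ∈ Finset.range r := Finset.mem_range.mpr hr
    exact Finset.sum_pos' (fun i _ => Nat.zero_le _) ⟨0, this, hlam 0 hr⟩
  have key : ∀ v ∈ {v : ℕ | ∃ s : ℕ → ℕ, (∀ i, i < r → 1 ≤ s i ∧ s i ≤ lam i) ∧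
      (∑ i ∈ Finset.range r, s i) = j ∧ v = kinf m r lam s}, lam0 * v ≤ m * j := by
    rintro v ⟨s, hs, hsum, rfl⟩
    have hk : ∀ i, i < r → kinf m r lam s ≤ s i * m / lam i := fun i hi =>
      csInf_le (OrderBot.bddBelow _) ⟨i, hi, rfl⟩
    calc lam0 * kinf m r lam s = ∑ i ∈ Finset.range r, lam i * kinf m r lam s := by
          rw [h0, Finset.sum_mul]
      _ ≤ ∑ i ∈ Finset.range r, s i * m := by
          apply Finset.sum_le_sum
          intro i hi
          rw [Finset.mem_range] at hi
          calc lam i * kinf m r lam s ≤ lam i * (s i * m / lam i) :=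
                Nat.mul_le_mul_left _ (hk i hi)
            _ ≤ s i * m := Nat.mul_div_le _ _
      _ = m * j := by rw [← Finset.sum_mul, hsum, Nat.mul_comm]
  have : eta m r lam j ≤ m * j / lam0 := by
    apply csSup_le'
    intro v hv
    exact (Nat.le_div_iff_mul_le hl0).mpr (by rw [Nat.mul_comm]; exact key v hv)
  calc lam0 * eta m r lam j ≤ lam0 * (m * j / lam0) := Nat.mul_le_mul_left _ this
    _ ≤ m * j := Nat.mul_div_le _ _

lemma eta_mul_lt (m r : ℕ) (lam : ℕ → ℕ) (hr : 1 ≤ r) (hlam : ∀ i, i < r → 1 ≤ lam i)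
    (lam0 : ℕ) (h0 : lam0 = ∑ i ∈ Finset.range r, lam i) (hco : Nat.gcd m lam0 = 1)
    (j : ℕ) (hj0 : 0 < j) (hjl : j < lam0) :
    lam0 * eta m r lam j < m * j := by
  rcases lt_or_eq_of_le (eta_mul_le m r lam hr hlam lam0 h0 j) with h | h
  · exact h
  · exfalso
    have hdvd : lam0 ∣ m * j := ⟨eta m r lam j, h.symm⟩
    have hcop : Nat.Coprime lam0 m := Nat.Coprime.symm hco
    have : lam0 ∣ j := hcop.dvd_of_dvd_mul_left hdvd
    have := Nat.le_of_dvd hj0 this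
    omega

/-- If η_k + η_{r+λ₀-1-k} = m, then ε_k + ε_{r+λ₀-1-k} = ε_{r-1} - λ₀ and ε_{r-1} > ε_k. -/
theorem stmt8 (m r : ℕ) (lam : ℕ → ℕ) (hm : 2 ≤ m) (hr : 2 ≤ r)
    (hlam : ∀ i, i < r → 1 ≤ lam i ∧ lam i < m) (lam0 : ℕ)
    (h0 : lam0 = ∑ i ∈ Finset.range r, lam i) (hco : Nat.gcd m lam0 = 1) (hrl : r ≤ lam0)
    (k : ℕ) (hk : k ≤ r + lam0 - 1)
    (hyp : etaExt m r lam0 lam k + etaExt m r lam0 lam (r + lam0 - 1 - k) = m) :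
    eps m r lam0 lam k + eps m r lam0 lam (r + lam0 - 1 - k) =
        eps m r lam0 lam (r - 1) - lam0 ∧
      eps m r lam0 lam (r - 1) > eps m r lam0 lam k := by
  set k' := r + lam0 - 1 - k with hk'
  have hlam1 : ∀ i, i < r → 1 ≤ lam i := fun i hi => (hlam i hi).1
  -- exclude k < r
  have hkr : r ≤ k := by
    by_contra h
    push_neg at h
    have h1 : etaExt m r lam0 lam k = 0 := by simp [etaExt, h]
    have h2 : etaExt m r lam0 lam k' = m - 1 := by
      unfold etaExt
      rw [if_neg (by omega : ¬ k' < r), if_neg (by omega : ¬ k' < lam0)]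
    omega
  -- exclude k ≥ lam0
  have hkl : k < lam0 := by
    by_contra h
    push_neg at h
    have h1 : etaExt m r lam0 lam k = m - 1 := by
      unfold etaExt
      rw [if_neg (by omega : ¬ k < r), if_neg (by omega : ¬ k < lam0)]
    have h2 : etaExt m r lam0 lam k' = 0 := by
      unfold etaExt
      rw [if_pos (by omega : k' < r)]
    omega
  have hk'r : r ≤ k' := by omega
  have hk'l : k' < lam0 := by omega
  have hek : etaExt m r lam0 lam k = eta m r lam k := by
    unfold etaExt
    rw [if_neg (by omega : ¬ k < r), if_pos hkl]
  have hek' : etaExt m r lam0 lam k' = eta m r lam k' := by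
    unfold etaExt
    rw [if_neg (by omega : ¬ k' < r), if_pos hk'l]
  have her : etaExt m r lam0 lam (r - 1) = 0 := by
    unfold etaExt
    rw [if_pos (by omega : r - 1 < r)]
  rw [hek, hek'] at hyp
  set a := eta m r lam k with ha
  set b := eta m r lam k' with hb
  have hblt : lam0 * b < m * k' :=
    eta_mul_lt m r lam (by omega) hlam1 lam0 h0 hco k' (by omega) hk'l
  -- lam0 * a = lam0 * m - lam0 * b ≥ m*(lam0 - k') + 1 = m*(k - r + 1) + 1
  have hkey : m * (k - r + 1) < lam0 * a := by
    have h1 : lam0 * a + lam0 * b = lam0 * m := by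
      rw [← Nat.mul_add, hyp]
    have h2 : lam0 - k' = k - r + 1 := by omega
    have h3 : m * lam0 = m * k' + m * (k - r + 1) := by
      rw [← Nat.mul_add]; congr 1; omega
    nlinarith [hblt, h1, h3]
  have hsum : (k : ℤ) + (k' : ℤ) = (r : ℤ) + lam0 - 1 := by
    have : k + k' = r + lam0 - 1 := by omega
    omega
  have hypz : (a : ℤ) + (b : ℤ) = m := by exact_mod_cast hyp
  have e1 : eps m r lam0 lam k = (m : ℤ) * k - (lam0 : ℤ) * ((a : ℤ) + 1) := by
    rw [eps, hek]
  have e2 : eps m r lam0 lam k' = (m : ℤ) * k' - (lam0 : ℤ) * ((b : ℤ) + 1) := by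
    rw [eps, hek']
  have e3 : eps m r lam0 lam (r - 1) = (m : ℤ) * ((r : ℤ) - 1) - lam0 := by
    rw [eps, her]
    have hr1 : ((r - 1 : ℕ) : ℤ) = (r : ℤ) - 1 := by omega
    rw [hr1]; ring
  have p1 : (lam0 : ℤ) * a + (lam0 : ℤ) * b = (lam0 : ℤ) * m := by
    rw [← mul_add, hypz]
  have p2 : (m : ℤ) * k + (m : ℤ) * k' = (m : ℤ) * ((r : ℤ) + lam0 - 1) := by
    rw [← mul_add, hsum]
  have hkeyz : (m : ℤ) * ((k : ℤ) - r + 1) < (lam0 : ℤ) * a := by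
    have h1 : ((k - r + 1 : ℕ) : ℤ) = (k : ℤ) - r + 1 := by omega
    calc (m : ℤ) * ((k : ℤ) - r + 1) = ((m * (k - r + 1) : ℕ) : ℤ) := by
          push_cast [h1]; ring
      _ < ((lam0 * a : ℕ) : ℤ) := by exact_mod_cast hkey
      _ = (lam0 : ℤ) * a := by push_cast; ring
  rw [e1, e2, e3]
  constructor
  · linarith [p1, p2]
  · linarith [hkeyz]
end

section
/- For each s ∈ ℕ₀, with η defined by η_s = 0 for 0 ≤ s < r, η_s = m-1 for s ≥ λ₀, and η_s = max over (s₁,…,s_r) with 1 ≤ s_i ≤ λ_i, ∑ s_i = s of min_i ⌊s_i m/λ_i⌋ for r ≤ s ≤ λ₀-1, one has η_s + η_{r+λ₀-1-s} ∈ {m-1, m}. In particular, if gcd(m, λ_j) = 1 for every j = 1,…,r, then η_s + η_{r+λ₀-1-s} = m - 1 for all s ∈ ℕ₀. -/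
open Finset

section CeilAux

/-- `cdiv m a = ⌈a/m⌉` -/
def cdiv (m a : ℕ) : ℕ := (a + (m-1))/m

lemma cdiv_le_iff {m : ℕ} (hm : 1 ≤ m) (a s : ℕ) : cdiv m a ≤ s ↔ a ≤ m * s := by
  unfold cdiv
  rw [Nat.div_le_iff_le_mul_add_pred (by omega)]; omega

lemma le_cdiv_mul {m : ℕ} (hm : 1 ≤ m) (a : ℕ) : a ≤ m * cdiv m a :=
  (cdiv_le_iff hm a _).1 le_rfl

lemma cdiv_mul_le (m a : ℕ) : m * cdiv m a ≤ a + (m-1) := by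
  unfold cdiv
  rw [mul_comm]
  exact Nat.div_mul_le_self _ _

lemma cdiv_mono {m : ℕ} (hm : 1 ≤ m) {a b : ℕ} (h : a ≤ b) : cdiv m a ≤ cdiv m b := by
  rw [cdiv_le_iff hm]
  exact le_trans h (le_cdiv_mul hm b)

lemma cdiv_superadd {m : ℕ} (hm : 1 ≤ m) (a b : ℕ) : cdiv m (a+b) ≤ cdiv m a + cdiv m b := by
  rw [cdiv_le_iff hm, mul_add]
  exact Nat.add_le_add (le_cdiv_mul hm a) (le_cdiv_mul hm b)

lemma cdiv_subadd {m : ℕ} (hm : 1 ≤ m) (a b : ℕ) : cdiv m a + cdiv m b ≤ cdiv m (a+b) + 1 := by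
  by_contra h
  push_neg at h
  have h2 : m * (cdiv m (a+b) + 2) ≤ m * (cdiv m a + cdiv m b) := Nat.mul_le_mul_left m h
  have h3 := cdiv_mul_le m a
  have h4 := cdiv_mul_le m b
  have h5 := le_cdiv_mul hm (a+b)
  have := mul_add m (cdiv m a) (cdiv m b)
  have := mul_add m (cdiv m (a+b)) 2
  omega

lemma lt_cdiv_mul_of_not_dvd {m : ℕ} (hm : 1 ≤ m) {a : ℕ} (h : ¬ m ∣ a) :
    a < m * cdiv m a := by
  rcases lt_or_eq_of_le (le_cdiv_mul hm a) with h1 | h1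
  · exact h1
  · exact absurd ⟨_, h1⟩ h

end CeilAux

/-- tuple existence: given bounds a i ≤ b i and total in range, a tuple summing to k exists -/
lemma exists_tuple (a b : ℕ → ℕ) :
    ∀ n k, (∀ i, i < n → a i ≤ b i) → (∑ i ∈ Finset.range n, a i) ≤ k →
      k ≤ ∑ i ∈ Finset.range n, b i →
      ∃ s : ℕ → ℕ, (∀ i, i < n → a i ≤ s i ∧ s i ≤ b i) ∧ (∑ i ∈ Finset.range n, s i) = k := by
  intro n
  induction n with
  | zero =>
      intro k _ h1 h2
      simp only [Finset.range_zero, Finset.sum_empty] at h1 h2 ⊢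
      exact ⟨a, fun i hi => absurd hi (Nat.not_lt_zero i), by omega⟩
  | succ n ih =>
      intro k hab h1 h2
      rw [Finset.sum_range_succ] at h1 h2
      have hA : (∑ i ∈ Finset.range n, a i) ≤ ∑ i ∈ Finset.range n, b i :=
        Finset.sum_le_sum (fun i hi => hab i (by simp at hi; omega))
      set A := ∑ i ∈ Finset.range n, a i with hAdef
      set B := ∑ i ∈ Finset.range n, b i with hBdef
      have han : a n ≤ b n := hab n (by omega)
      set sn := min (b n) (k - A) with hsn
      have h3 : A ≤ k - sn := by omega
      have h4 : k - sn ≤ B := by omega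
      obtain ⟨s', hs', hsum'⟩ := ih (k - sn) (fun i hi => hab i (by omega)) h3 h4
      refine ⟨fun i => if i = n then sn else s' i, ?_, ?_⟩
      · intro i hi
        by_cases hin : i = n
        · simp [hin]; omega
        · simp [hin]; exact hs' i (by omega)
      · rw [Finset.sum_range_succ]
        have : (∑ i ∈ Finset.range n, (if i = n then sn else s' i)) =
            ∑ i ∈ Finset.range n, s' i := by
          apply Finset.sum_congr rfl
          intro i hi
          simp at hi
          simp [Nat.ne_of_lt hi]
        simp only [this, hsum', if_pos]
        have : sn ≤ k := by omega
        omega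

section Main

variable (m r : ℕ) (lam : ℕ → ℕ)

/-- F w = ∑ ⌈w λ_i / m⌉ -/
def Fc (w : ℕ) : ℕ := ∑ i ∈ Finset.range r, cdiv m (w * lam i)

variable {m r lam}
variable (hm : 2 ≤ m) (hr : 2 ≤ r) (hlam : ∀ i, i < r → 1 ≤ lam i ∧ lam i < m)

include hm hr hlam

lemma etaSet_bddAbove (k : ℕ) :
    BddAbove {v : ℕ | ∃ s : ℕ → ℕ, (∀ i, i < r → 1 ≤ s i ∧ s i ≤ lam i) ∧
      (∑ i ∈ Finset.range r, s i) = k ∧ v = kinf m r lam s} := by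
  refine ⟨m*m, fun v hv => ?_⟩
  obtain ⟨s, hs, -, rfl⟩ := hv
  have h0r : 0 < r := by omega
  have hmem : s 0 * m / lam 0 ∈ {w : ℕ | ∃ i, i < r ∧ w = s i * m / lam i} := ⟨0, h0r, rfl⟩
  refine le_trans (Nat.sInf_le hmem) ?_
  calc s 0 * m / lam 0 ≤ s 0 * m := Nat.div_le_self _ _
    _ ≤ m * m := Nat.mul_le_mul_right m (le_trans (hs 0 h0r).2 (le_of_lt (hlam 0 h0r).2))

lemma le_kinf_iff (s : ℕ → ℕ) (w : ℕ) :
    w ≤ kinf m r lam s ↔ ∀ i, i < r → w * lam i ≤ s i * m := by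
  unfold kinf
  have hne : {w : ℕ | ∃ i, i < r ∧ w = s i * m / lam i}.Nonempty :=
    ⟨s 0 * m / lam 0, 0, by omega, rfl⟩
  rw [le_csInf_iff (OrderBot.bddBelow _) hne]
  constructor
  · intro h i hi
    have := h _ ⟨i, hi, rfl⟩
    rw [Nat.le_div_iff_mul_le (hlam i hi).1] at this
    exact this
  · rintro h x ⟨i, hi, rfl⟩
    rw [Nat.le_div_iff_mul_le (hlam i hi).1]
    exact h i hi

lemma eta_char {k : ℕ} (hk1 : r ≤ k) (hk2 : k < ∑ i ∈ Finset.range r, lam i)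
    {w : ℕ} (hw : 1 ≤ w) :
    w ≤ eta m r lam k ↔ Fc m r lam w ≤ k := by
  have hmpos : 1 ≤ m := by omega
  constructor
  · intro h
    -- sSup ∈ set
    have hne : {v : ℕ | ∃ s : ℕ → ℕ, (∀ i, i < r → 1 ≤ s i ∧ s i ≤ lam i) ∧
        (∑ i ∈ Finset.range r, s i) = k ∧ v = kinf m r lam s}.Nonempty := by
      obtain ⟨s, hs, hsum⟩ := exists_tuple (fun _ => 1) lam r k
        (fun i hi => (hlam i hi).1) (by simpa using hk1) (le_of_lt hk2)
      exact ⟨kinf m r lam s, s, fun i hi => ⟨(hs i hi).1, (hs i hi).2⟩, hsum, rfl⟩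
    have hmem := Nat.sSup_mem hne (etaSet_bddAbove hm hr hlam k)
    obtain ⟨s, hs, hsum, hv⟩ := hmem
    have hwk : w ≤ kinf m r lam s := by rw [← hv]; exact h
    rw [le_kinf_iff hm hr hlam] at hwk
    have hcd : ∀ i, i < r → cdiv m (w * lam i) ≤ s i := by
      intro i hi
      rw [cdiv_le_iff hmpos, mul_comm m (s i)]
      exact hwk i hi
    calc Fc m r lam w = ∑ i ∈ Finset.range r, cdiv m (w * lam i) := rfl
      _ ≤ ∑ i ∈ Finset.range r, s i := Finset.sum_le_sum (fun i hi => hcd i (by simp at hi; exact hi))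
      _ = k := hsum
  · intro h
    -- first, w ≤ m
    have hwm : w ≤ m := by
      by_contra hc
      push_neg at hc
      have : ∀ i ∈ Finset.range r, lam i + 1 ≤ cdiv m (w * lam i) := by
        intro i hi
        simp only [Finset.mem_range] at hi
        have h1 : (lam i) * m < w * lam i := by
          have := (hlam i hi).1
          calc lam i * m = m * lam i := mul_comm _ _
            _ < w * lam i := by
                apply Nat.mul_lt_mul_of_lt_of_le hc le_rfl
                omega
        by_contra hc2
        push_neg at hc2
        rw [Nat.lt_succ_iff, cdiv_le_iff hmpos, mul_comm m (lam i)] at hc2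
        omega
      have hge : (∑ i ∈ Finset.range r, (lam i + 1)) ≤ Fc m r lam w := Finset.sum_le_sum this
      rw [Finset.sum_add_distrib] at hge
      simp at hge
      omega
    -- build tuple with a i = cdiv m (w * lam i)
    obtain ⟨s, hs, hsum⟩ := exists_tuple (fun i => cdiv m (w * lam i)) lam r k
      (fun i hi => by
        rw [cdiv_le_iff hmpos]
        exact Nat.mul_le_mul_right (lam i) hwm)
      h (le_of_lt hk2)
    have h1le : ∀ i, i < r → 1 ≤ s i := by
      intro i hi
      have := (hs i hi).1
      have h1 : 1 ≤ cdiv m (w * lam i) := by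
        by_contra hc
        push_neg at hc
        rw [Nat.lt_one_iff] at hc
        have := (cdiv_le_iff hmpos (w * lam i) 0).1 (le_of_eq hc)
        have := (hlam i hi).1
        nlinarith [(hlam i hi).1, hw]
      omega
    have hwle : w ≤ kinf m r lam s := by
      rw [le_kinf_iff hm hr hlam]
      intro i hi
      have h1 := (hs i hi).1
      have h2 : m * cdiv m (w * lam i) ≤ m * s i := Nat.mul_le_mul_left m h1
      have h3 := le_cdiv_mul hmpos (w * lam i)
      rw [mul_comm (s i) m]
      omega
    refine le_trans hwle (le_csSup (etaSet_bddAbove hm hr hlam k) ?_)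
    exact ⟨s, fun i hi => ⟨h1le i hi, (hs i hi).2⟩, hsum, rfl⟩

lemma eta_le_sub_two {k : ℕ} (hk1 : r ≤ k) (hk2 : k < ∑ i ∈ Finset.range r, lam i) :
    eta m r lam k ≤ m - 2 := by
  have hmpos : 1 ≤ m := by omega
  by_contra hc
  push_neg at hc
  have h1 : m - 1 ≤ eta m r lam k := by omega
  have h2 := (eta_char hm hr hlam hk1 hk2 (w := m-1) (by omega)).1 h1
  have h3 : ∀ i ∈ Finset.range r, lam i ≤ cdiv m ((m-1) * lam i) := by
    intro i hi
    simp only [Finset.mem_range] at hi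
    obtain ⟨hl1, hl2⟩ := hlam i hi
    by_contra hc2
    push_neg at hc2
    rw [Nat.lt_iff_add_one_le] at hc2
    have hc3 : cdiv m ((m-1) * lam i) ≤ lam i - 1 := by omega
    rw [cdiv_le_iff hmpos] at hc3
    have e1 : (m-1) * lam i = m * lam i - lam i := by rw [Nat.sub_mul, one_mul]
    have e2 : m * (lam i - 1) = m * lam i - m := by rw [Nat.mul_sub, mul_one]
    have e3 : m ≤ m * lam i := Nat.le_mul_of_pos_right m hl1
    omega
  have h4 : (∑ i ∈ Finset.range r, lam i) ≤ Fc m r lam (m-1) := Finset.sum_le_sum h3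
  unfold Fc at h2
  unfold Fc at h4
  omega

end Main

section Pair
variable {m r : ℕ} {lam : ℕ → ℕ}
variable (hm : 2 ≤ m) (hr : 2 ≤ r) (hlam : ∀ i, i < r → 1 ≤ lam i ∧ lam i < m)
include hm hr hlam

lemma cdiv_m_mul (hmp : 1 ≤ m) (l : ℕ) : cdiv m (m * l) = l := by
  refine le_antisymm ((cdiv_le_iff hmp _ _).2 le_rfl) ?_
  have := le_cdiv_mul hmp (m * l)
  exact Nat.le_of_mul_le_mul_left this (by omega)

omit hm hr hlam in
lemma Fc_mono (hmp : 1 ≤ m) {a b : ℕ} (h : a ≤ b) : Fc m r lam a ≤ Fc m r lam b := by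
  apply Finset.sum_le_sum
  intro i _
  exact cdiv_mono hmp (Nat.mul_le_mul_right _ h)

lemma eta_pair {s : ℕ} (hs1 : r ≤ s) (hs2 : s < ∑ i ∈ Finset.range r, lam i) :
    m - 1 ≤ eta m r lam s + eta m r lam (r + (∑ i ∈ Finset.range r, lam i) - 1 - s) ∧
    eta m r lam s + eta m r lam (r + (∑ i ∈ Finset.range r, lam i) - 1 - s) ≤ m ∧
    ((∀ j, j < r → Nat.gcd m (lam j) = 1) →
      eta m r lam s + eta m r lam (r + (∑ i ∈ Finset.range r, lam i) - 1 - s) ≤ m - 1) := by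
  have hmp : 1 ≤ m := by omega
  set L := ∑ i ∈ Finset.range r, lam i with hL
  set t := r + L - 1 - s with ht
  have ht1 : r ≤ t := by omega
  have ht2 : t < L := by omega
  have hst : s + t = r + L - 1 := by omega
  set w := eta m r lam s with hw
  set w' := eta m r lam t with hw'
  have hwle : w ≤ m - 2 := eta_le_sub_two hm hr hlam hs1 hs2
  have hw'le : w' ≤ m - 2 := eta_le_sub_two hm hr hlam ht1 ht2
  have hLr : (∑ i ∈ Finset.range r, (lam i + 1)) = L + r := by
    rw [Finset.sum_add_distrib]; simp; rfl
  refine ⟨?_, ?_, ?_⟩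
  · -- lower bound
    by_contra hc
    push_neg at hc
    have hww' : w + w' ≤ m - 2 := by omega
    set u := m - 1 - w with hu
    have hu1 : 1 ≤ u := by omega
    have h1 : ¬ (u ≤ w') := by omega
    rw [hw', eta_char hm hr hlam ht1 ht2 hu1] at h1
    push_neg at h1
    have h2 : ¬ ((w : ℕ) + 1 ≤ w) := by omega
    rw [hw, eta_char hm hr hlam hs1 hs2 (by omega : 1 ≤ w + 1)] at h2
    push_neg at h2
    -- pointwise: cdiv (u λ) + cdiv ((w+1) λ) ≤ λ + 1
    have hpt : ∀ i ∈ Finset.range r, cdiv m (u * lam i) + cdiv m ((w+1) * lam i) ≤ lam i + 1 := by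
      intro i hi
      simp only [Finset.mem_range] at hi
      have e : u * lam i + (w+1) * lam i = m * lam i := by
        rw [← Nat.add_mul]
        congr 1
        omega
      have := cdiv_subadd hmp (u * lam i) ((w+1) * lam i)
      rw [e, cdiv_m_mul hm hr hlam hmp] at this
      exact this
    have hsum : Fc m r lam u + Fc m r lam (w+1) ≤ L + r := by
      rw [← hLr]
      unfold Fc
      rw [← Finset.sum_add_distrib]
      exact Finset.sum_le_sum hpt
    omega
  · -- upper bound
    by_contra hc
    push_neg at hc
    have hge : m + 1 ≤ w + w' := hc
    have hw1 : 1 ≤ w := by omega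
    have hw'1 : 1 ≤ w' := by omega
    have h1 : Fc m r lam w ≤ s := (eta_char hm hr hlam hs1 hs2 hw1).1 le_rfl
    have h2 : Fc m r lam w' ≤ t := (eta_char hm hr hlam ht1 ht2 hw'1).1 le_rfl
    have hpt : ∀ i ∈ Finset.range r, lam i + 1 ≤ cdiv m (w * lam i) + cdiv m (w' * lam i) := by
      intro i hi
      simp only [Finset.mem_range] at hi
      have hl1 := (hlam i hi).1
      have e : w * lam i + w' * lam i = (w + w') * lam i := by rw [Nat.add_mul]
      have h3 : cdiv m ((w + w') * lam i) ≤ cdiv m (w * lam i) + cdiv m (w' * lam i) := by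
        rw [← e]; exact cdiv_superadd hmp _ _
      have h4 : lam i + 1 ≤ cdiv m ((w + w') * lam i) := by
        by_contra hc2
        push_neg at hc2
        rw [Nat.lt_succ_iff, cdiv_le_iff hmp] at hc2
        have h5 : (m + 1) * lam i ≤ (w + w') * lam i := Nat.mul_le_mul_right _ hge
        have h6 : (m+1) * lam i = m * lam i + lam i := by rw [Nat.add_mul, one_mul]
        omega
      omega
    have hsum : L + r ≤ Fc m r lam w + Fc m r lam w' := by
      rw [← hLr]
      unfold Fc
      rw [← Finset.sum_add_distrib]
      exact Finset.sum_le_sum hpt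
    omega
  · -- gcd case
    intro hgcd
    by_contra hc
    push_neg at hc
    have hge : m ≤ w + w' := by omega
    have hw1 : 1 ≤ w := by omega
    have hw'1 : 1 ≤ w' := by omega
    have h1 : Fc m r lam w ≤ s := (eta_char hm hr hlam hs1 hs2 hw1).1 le_rfl
    have h2 : Fc m r lam w' ≤ t := (eta_char hm hr hlam ht1 ht2 hw'1).1 le_rfl
    have hpt : ∀ i ∈ Finset.range r, lam i + 1 ≤ cdiv m (w * lam i) + cdiv m (w' * lam i) := by
      intro i hi
      simp only [Finset.mem_range] at hi
      have hl1 := (hlam i hi).1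
      have hnd : ¬ m ∣ w * lam i := by
        intro hdvd
        have hcop : Nat.Coprime m (lam i) := hgcd i hi
        have : m ∣ w := hcop.dvd_of_dvd_mul_right hdvd
        obtain ⟨c, hcc⟩ := this
        rcases Nat.eq_zero_or_pos c with rfl | hcpos
        · omega
        · have : m ≤ m * c := Nat.le_mul_of_pos_right m hcpos
          omega
      have h3 := lt_cdiv_mul_of_not_dvd hmp hnd
      have h4 := le_cdiv_mul hmp (w' * lam i)
      have h5 : m * lam i ≤ (w + w') * lam i := Nat.mul_le_mul_right _ hge
      have h6 : (w + w') * lam i = w * lam i + w' * lam i := by rw [Nat.add_mul]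
      have h7 : m * lam i + 1 ≤ m * (cdiv m (w * lam i) + cdiv m (w' * lam i)) := by
        rw [Nat.mul_add]
        omega
      by_contra hc2
      push_neg at hc2
      rw [Nat.lt_succ_iff] at hc2
      have h8 : m * (cdiv m (w * lam i) + cdiv m (w' * lam i)) ≤ m * lam i :=
        Nat.mul_le_mul_left m hc2
      omega
    have hsum : L + r ≤ Fc m r lam w + Fc m r lam w' := by
      rw [← hLr]
      unfold Fc
      rw [← Finset.sum_add_distrib]
      exact Finset.sum_le_sum hpt
    omega

end Pair

/-- For every s ∈ ℕ₀, η_s + η_{r+λ₀-1-s} ∈ {m-1, m}; and if gcd(m, λ_j) = 1 for all j,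
then η_s + η_{r+λ₀-1-s} = m - 1 for all s. -/
theorem stmt11 (m r : ℕ) (lam : ℕ → ℕ) (hm : 2 ≤ m) (hr : 2 ≤ r)
    (hlam : ∀ i, i < r → 1 ≤ lam i ∧ lam i < m) (lam0 : ℕ)
    (h0 : lam0 = ∑ i ∈ Finset.range r, lam i) :
    (∀ s : ℕ, etaExt m r lam0 lam s + etaExt m r lam0 lam (r + lam0 - 1 - s) = m - 1 ∨
        etaExt m r lam0 lam s + etaExt m r lam0 lam (r + lam0 - 1 - s) = m) ∧
      ((∀ j, j < r → Nat.gcd m (lam j) = 1) →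
        ∀ s : ℕ, etaExt m r lam0 lam s + etaExt m r lam0 lam (r + lam0 - 1 - s) = m - 1) := by
  have hrL : r ≤ lam0 := by
    rw [h0]
    calc r = ∑ _i ∈ Finset.range r, 1 := by simp
      _ ≤ ∑ i ∈ Finset.range r, lam i :=
        Finset.sum_le_sum (fun i hi => (hlam i (Finset.mem_range.1 hi)).1)
  have main : ∀ s : ℕ,
      (m - 1 ≤ etaExt m r lam0 lam s + etaExt m r lam0 lam (r + lam0 - 1 - s) ∧
        etaExt m r lam0 lam s + etaExt m r lam0 lam (r + lam0 - 1 - s) ≤ m) ∧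
      ((∀ j, j < r → Nat.gcd m (lam j) = 1) →
        etaExt m r lam0 lam s + etaExt m r lam0 lam (r + lam0 - 1 - s) ≤ m - 1) := by
    intro s
    by_cases hc1 : s < r
    · have hE1 : etaExt m r lam0 lam s = 0 := by
        simp only [etaExt]; rw [if_pos hc1]
      have hE2 : etaExt m r lam0 lam (r + lam0 - 1 - s) = m - 1 := by
        simp only [etaExt]; rw [if_neg (by omega), if_neg (by omega)]
      exact ⟨⟨by omega, by omega⟩, fun _ => by omega⟩
    · by_cases hc2 : s < lam0
      · have h1 : r ≤ s := by omega
        have hs2 : s < ∑ i ∈ Finset.range r, lam i := by rw [← h0]; exact hc2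
        have ht1 : r ≤ r + lam0 - 1 - s := by omega
        have ht2 : r + lam0 - 1 - s < lam0 := by omega
        obtain ⟨p1, p2, p3⟩ := eta_pair hm hr hlam h1 hs2
        have hTT : r + (∑ i ∈ Finset.range r, lam i) - 1 - s = r + lam0 - 1 - s := by
          rw [← h0]
        rw [hTT] at p1 p2 p3
        have hE1 : etaExt m r lam0 lam s = eta m r lam s := by
          simp only [etaExt]; rw [if_neg (by omega), if_pos hc2]
        have hE2 : etaExt m r lam0 lam (r + lam0 - 1 - s) = eta m r lam (r + lam0 - 1 - s) := by
          simp only [etaExt]; rw [if_neg (by omega), if_pos ht2]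
        rw [hE1, hE2]
        exact ⟨⟨p1, p2⟩, p3⟩
      · have hE1 : etaExt m r lam0 lam s = m - 1 := by
          simp only [etaExt]; rw [if_neg (by omega), if_neg (by omega)]
        have hE2 : etaExt m r lam0 lam (r + lam0 - 1 - s) = 0 := by
          simp only [etaExt]; rw [if_pos (by omega)]
        exact ⟨⟨by omega, by omega⟩, fun _ => by omega⟩
  constructor
  · intro s
    have := (main s).1
    omega
  · intro hg s
    have h1 := (main s).1
    have h2 := (main s).2 hg
    omega
end

section
/- If λ_j divides m for every j = 1,…,r, then η_s + η_{r+λ₀-1-s} = m for every s with r ≤ s ≤ λ₀ - 1, where η_s = max over tuples (s₁,…,s_r) with 1 ≤ s_i ≤ λ_i, ∑ s_i = s of min_{1≤i≤r} ⌊s_i m / λ_i⌋. -/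
open Finset

namespace Stmt12Aux

lemma cdiv_le {d v x : ℕ} (hd : 0 < d) : (v + d - 1) / d ≤ x ↔ v ≤ x * d := by
  rw [Nat.div_le_iff_le_mul_add_pred hd, Nat.mul_comm]
  omega

lemma cdiv_mul {d k : ℕ} (hd : 0 < d) : (k * d + d - 1) / d = k := by
  have h1 : (k * d + d - 1) / d ≤ k := (cdiv_le hd).mpr le_rfl
  rcases k with _ | k
  · simpa using Nat.div_eq_of_lt (by omega)
  · have h2 : ¬ ((k + 1) * d + d - 1) / d ≤ k := by
      rw [cdiv_le hd]
      have : (k + 1) * d = k * d + d := by ring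
      omega
    omega

lemma cdiv_succ {d v : ℕ} (hd : 0 < d) :
    (v + 1 + d - 1) / d = (v + d - 1) / d + (if d ∣ v then 1 else 0) := by
  by_cases h : d ∣ v
  · obtain ⟨q, rfl⟩ := h
    rw [if_pos ⟨q, rfl⟩]
    have e1 : d * q + 1 + d - 1 = (q + 1) * d := by
      have : (q + 1) * d = d * q + d := by ring
      omega
    have e2 : d * q + d - 1 = q * d + d - 1 := by
      have : q * d = d * q := by ring
      omega
    rw [e1, e2, Nat.mul_div_cancel _ hd, cdiv_mul hd]
  · rw [if_neg h]
    have hq := Nat.div_add_mod v d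
    have hr0 : v % d ≠ 0 := fun hh => h (Nat.dvd_of_mod_eq_zero hh)
    have hrd : v % d < d := Nat.mod_lt _ hd
    have hm : (v / d + 1) * d = d * (v / d) + d := by ring
    have e1 : v + 1 + d - 1 = v % d + (v / d + 1) * d := by omega
    have e2 : v + d - 1 = (v % d - 1) + (v / d + 1) * d := by omega
    rw [e1, e2, Nat.add_mul_div_right _ _ hd, Nat.add_mul_div_right _ _ hd,
      Nat.div_eq_of_lt hrd, Nat.div_eq_of_lt (show v % d - 1 < d by omega)]
    simp

lemma cdiv_compl {d v l : ℕ} (hd : 0 < d) (hv : v ≤ l * d) :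
    (l * d - v + d - 1) / d + (v + d - 1) / d + (if d ∣ v then 1 else 0) = l + 1 := by
  by_cases h : d ∣ v
  · obtain ⟨q, rfl⟩ := h
    rw [if_pos ⟨q, rfl⟩]
    have hcomm : q * d = d * q := by ring
    have hql : q ≤ l := by
      by_contra hc
      push_neg at hc
      have := (Nat.mul_lt_mul_right hd).mpr hc
      omega
    have e1 : l * d - d * q = (l - q) * d := by
      have h1 : (l - q) * d = l * d - q * d := Nat.sub_mul l q d
      have h2 : q * d ≤ l * d := Nat.mul_le_mul_right d hql
      omega
    have e2 : d * q + d - 1 = q * d + d - 1 := by omega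
    rw [e1, e2, cdiv_mul hd, cdiv_mul hd]
    omega
  · rw [if_neg h]
    have hq := Nat.div_add_mod v d
    have hr0 : v % d ≠ 0 := fun hh => h (Nat.dvd_of_mod_eq_zero hh)
    have hrd : v % d < d := Nat.mod_lt _ hd
    have hcomm : v / d * d = d * (v / d) := by ring
    have hql : v / d < l := by
      by_contra hc
      push_neg at hc
      have := Nat.mul_le_mul_right d hc
      omega
    have hsub : (l - v / d) * d = l * d - v / d * d := Nat.sub_mul _ _ _
    have hle : v / d * d ≤ l * d := Nat.mul_le_mul_right d hql.le
    have e1 : l * d - v + d - 1 = (d - 1 - v % d) + (l - v / d) * d := by omega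
    have e2 : v + d - 1 = (v % d - 1) + (v / d + 1) * d := by
      have : (v / d + 1) * d = d * (v / d) + d := by ring
      omega
    rw [e1, e2, Nat.add_mul_div_right _ _ hd, Nat.add_mul_div_right _ _ hd,
      Nat.div_eq_of_lt (show d - 1 - v % d < d by omega),
      Nat.div_eq_of_lt (show v % d - 1 < d by omega)]
    omega

lemma exists_tuple (a b : ℕ → ℕ) :
    ∀ n k, (∀ i, i < n → a i ≤ b i) →
    (∑ i ∈ range n, a i) ≤ k → k ≤ ∑ i ∈ range n, b i →
    ∃ s : ℕ → ℕ, (∀ i, i < n → a i ≤ s i ∧ s i ≤ b i) ∧ ∑ i ∈ range n, s i = k := by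
  intro n
  induction n with
  | zero =>
    intro k _ h1 h2
    exact ⟨a, by omega, by simp at h1 h2 ⊢; omega⟩
  | succ n ih =>
    intro k hab h1 h2
    rw [Finset.sum_range_succ] at h1 h2
    set t := max (a n) (k - ∑ i ∈ range n, b i) with ht
    have hchoice : t = a n ∨ t = k - ∑ i ∈ range n, b i := by
      rw [ht]; exact max_choice _ _
    have hta : a n ≤ t := by rw [ht]; exact le_max_left _ _
    have htkb : k - ∑ i ∈ range n, b i ≤ t := by rw [ht]; exact le_max_right _ _
    clear_value t
    have habn := hab n (Nat.lt_succ_self n)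
    have hAB : ∑ i ∈ range n, a i ≤ ∑ i ∈ range n, b i :=
      Finset.sum_le_sum fun i hi => hab i (by simp at hi; omega)
    have htb : t ≤ b n := by omega
    have h3 : ∑ i ∈ range n, a i ≤ k - t := by rcases hchoice with h | h <;> omega
    have h4 : k - t ≤ ∑ i ∈ range n, b i := by rcases hchoice with h | h <;> omega
    have h5 : t ≤ k := by rcases hchoice with h | h <;> omega
    obtain ⟨s, hs, hsum⟩ := ih (k - t) (fun i hi => hab i (by omega)) h3 h4
    refine ⟨Function.update s n t, ?_, ?_⟩
    · intro i hi
      rcases eq_or_ne i n with rfl | hne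
      · rw [Function.update_self]; exact ⟨hta, htb⟩
      · rw [Function.update_of_ne hne]; exact hs i (by omega)
    · rw [Finset.sum_range_succ, Function.update_self]
      have he : ∑ i ∈ range n, Function.update s n t i = ∑ i ∈ range n, s i :=
        Finset.sum_congr rfl fun i hi => Function.update_of_ne (by simp at hi; omega) _ _
      omega

/-- minimal total weight to make the min at least v -/
def gfun (m r : ℕ) (lam : ℕ → ℕ) (v : ℕ) : ℕ :=
  ∑ i ∈ range r, (v + m / lam i - 1) / (m / lam i)

/-- number of indices i with (m / lam i) ∣ v -/
def cfun (m r : ℕ) (lam : ℕ → ℕ) (v : ℕ) : ℕ :=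
  ((range r).filter (fun i => (m / lam i) ∣ v)).card

section
variable {m r : ℕ} {lam : ℕ → ℕ}

lemma hd_pos (hlam : ∀ i, i < r → 1 ≤ lam i ∧ lam i < m) :
    ∀ i, i < r → 0 < m / lam i := fun i hi =>
  Nat.div_pos (hlam i hi).2.le (hlam i hi).1

lemma hld (hdvd : ∀ j, j < r → lam j ∣ m) :
    ∀ i, i < r → lam i * (m / lam i) = m := fun i hi =>
  Nat.mul_div_cancel' (hdvd i hi)

lemma eta_bdd (hm : 2 ≤ m) (hr : 2 ≤ r)
    (hlam : ∀ i, i < r → 1 ≤ lam i ∧ lam i < m) (k : ℕ) :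
    BddAbove {v : ℕ | ∃ s : ℕ → ℕ, (∀ i, i < r → 1 ≤ s i ∧ s i ≤ lam i) ∧
      (∑ i ∈ Finset.range r, s i) = k ∧ v = kinf m r lam s} := by
  refine ⟨m, ?_⟩
  rintro x ⟨s, hs, hsum, rfl⟩
  have h1 : kinf m r lam s ≤ s 0 * m / lam 0 := Nat.sInf_le ⟨0, by omega, rfl⟩
  have h2 : s 0 * m / lam 0 ≤ lam 0 * m / lam 0 :=
    Nat.div_le_div_right (Nat.mul_le_mul_right m (hs 0 (by omega)).2)
  have h3 : lam 0 * m / lam 0 = m := Nat.mul_div_cancel_left m (hlam 0 (by omega)).1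
  omega

lemma eta_ge (hm : 2 ≤ m) (hr : 2 ≤ r)
    (hlam : ∀ i, i < r → 1 ≤ lam i ∧ lam i < m) (hdvd : ∀ j, j < r → lam j ∣ m)
    (k v : ℕ) (hv1 : 1 ≤ v) (hvm : v ≤ m)
    (hgk : gfun m r lam v ≤ k) (hk : k ≤ ∑ i ∈ range r, lam i) :
    v ≤ eta m r lam k := by
  have hd := hd_pos hlam
  have hl := hld hdvd
  obtain ⟨s, hs, hsum⟩ := exists_tuple (fun i => (v + m / lam i - 1) / (m / lam i)) lam r k
    (fun i hi => (cdiv_le (hd i hi)).mpr (by rw [hl i hi]; exact hvm)) hgk hk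
  have hs1 : ∀ i, i < r → 1 ≤ s i ∧ s i ≤ lam i := by
    intro i hi
    refine ⟨le_trans ?_ (hs i hi).1, (hs i hi).2⟩
    by_contra hc
    push_neg at hc
    have : (v + m / lam i - 1) / (m / lam i) ≤ 0 := by omega
    rw [cdiv_le (hd i hi)] at this
    omega
  have hmem : kinf m r lam s ∈ {v : ℕ | ∃ s : ℕ → ℕ,
      (∀ i, i < r → 1 ≤ s i ∧ s i ≤ lam i) ∧
      (∑ i ∈ Finset.range r, s i) = k ∧ v = kinf m r lam s} := ⟨s, hs1, hsum, rfl⟩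
  have hvk : v ≤ kinf m r lam s := by
    refine le_csInf ⟨s 0 * m / lam 0, 0, by omega, rfl⟩ ?_
    rintro b ⟨i, hi, rfl⟩
    rw [Nat.mul_div_assoc _ (hdvd i hi)]
    exact (cdiv_le (hd i hi)).mp (hs i hi).1
  exact le_trans hvk (le_csSup (eta_bdd hm hr hlam k) hmem)

lemma eta_le (hm : 2 ≤ m) (hr : 2 ≤ r)
    (hlam : ∀ i, i < r → 1 ≤ lam i ∧ lam i < m) (hdvd : ∀ j, j < r → lam j ∣ m)
    (k v : ℕ) (hgk : k + 1 ≤ gfun m r lam (v + 1)) :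
    eta m r lam k ≤ v := by
  have hd := hd_pos hlam
  apply csSup_le'
  rintro x ⟨s, hs, hsum, rfl⟩
  by_contra hc
  push_neg at hc
  have hle : ∀ i ∈ range r, (v + 1 + m / lam i - 1) / (m / lam i) ≤ s i := by
    intro i hi
    rw [mem_range] at hi
    have h1 : kinf m r lam s ≤ s i * m / lam i := Nat.sInf_le ⟨i, hi, rfl⟩
    rw [Nat.mul_div_assoc _ (hdvd i hi)] at h1
    exact (cdiv_le (hd i hi)).mpr (by omega)
  have := Finset.sum_le_sum hle
  rw [hsum] at this
  have hgf : gfun m r lam (v + 1) = ∑ i ∈ range r, (v + 1 + m / lam i - 1) / (m / lam i) := rfl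
  omega

lemma g_eta_le (hm : 2 ≤ m) (hr : 2 ≤ r)
    (hlam : ∀ i, i < r → 1 ≤ lam i ∧ lam i < m) (hdvd : ∀ j, j < r → lam j ∣ m)
    (k : ℕ) (hk1 : r ≤ k) (hk2 : k ≤ ∑ i ∈ range r, lam i) :
    gfun m r lam (eta m r lam k) ≤ k := by
  have hd := hd_pos hlam
  have hne : {v : ℕ | ∃ s : ℕ → ℕ, (∀ i, i < r → 1 ≤ s i ∧ s i ≤ lam i) ∧
      (∑ i ∈ Finset.range r, s i) = k ∧ v = kinf m r lam s}.Nonempty := by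
    obtain ⟨s, hs, hsum⟩ := exists_tuple (fun _ => 1) lam r k
      (fun i hi => (hlam i hi).1) (by simpa using hk1) hk2
    exact ⟨kinf m r lam s, s, hs, hsum, rfl⟩
  have hmem : eta m r lam k ∈ {v : ℕ | ∃ s : ℕ → ℕ,
      (∀ i, i < r → 1 ≤ s i ∧ s i ≤ lam i) ∧
      (∑ i ∈ Finset.range r, s i) = k ∧ v = kinf m r lam s} :=
    Nat.sSup_mem hne (eta_bdd hm hr hlam k)
  obtain ⟨s, hs, hsum, heq⟩ := hmem
  have hle : ∀ i ∈ range r, (eta m r lam k + m / lam i - 1) / (m / lam i) ≤ s i := by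
    intro i hi
    rw [mem_range] at hi
    have h1 : kinf m r lam s ≤ s i * m / lam i := Nat.sInf_le ⟨i, hi, rfl⟩
    rw [Nat.mul_div_assoc _ (hdvd i hi)] at h1
    rw [cdiv_le (hd i hi)]
    omega
  have := Finset.sum_le_sum hle
  rw [hsum] at this
  exact this

lemma gfun_one (hlam : ∀ i, i < r → 1 ≤ lam i ∧ lam i < m) : gfun m r lam 1 = r := by
  have hd := hd_pos hlam
  rw [gfun]
  have key : ∀ i ∈ range r, (1 + m / lam i - 1) / (m / lam i) = 1 := by
    intro i hi
    rw [mem_range] at hi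
    have hdi := hd i hi
    have e : 1 + m / lam i - 1 = m / lam i := by omega
    rw [e, Nat.div_self (hd i hi)]
  rw [Finset.sum_congr rfl key, Finset.sum_const, card_range, smul_eq_mul, mul_one]

lemma gfun_m (hlam : ∀ i, i < r → 1 ≤ lam i ∧ lam i < m) (hdvd : ∀ j, j < r → lam j ∣ m) :
    gfun m r lam m = ∑ i ∈ range r, lam i := by
  have hd := hd_pos hlam
  have hl := hld hdvd
  rw [gfun]
  refine Finset.sum_congr rfl fun i hi => ?_
  rw [mem_range] at hi
  have h2 := cdiv_mul (d := m / lam i) (k := lam i) (hd i hi)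
  rw [hl i hi] at h2
  exact h2

lemma gfun_step (hlam : ∀ i, i < r → 1 ≤ lam i ∧ lam i < m) (v : ℕ) :
    gfun m r lam (v + 1) = gfun m r lam v + cfun m r lam v := by
  have hd := hd_pos hlam
  rw [gfun, gfun, cfun, Finset.card_filter,
    Finset.sum_congr rfl (fun i hi => cdiv_succ (hd i (mem_range.mp hi))),
    Finset.sum_add_distrib]

lemma gfun_compl (hlam : ∀ i, i < r → 1 ≤ lam i ∧ lam i < m)
    (hdvd : ∀ j, j < r → lam j ∣ m) (v : ℕ) (hv : v ≤ m) :
    gfun m r lam (m - v) + gfun m r lam v + cfun m r lam v = (∑ i ∈ range r, lam i) + r := by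
  have hd := hd_pos hlam
  have hl := hld hdvd
  have key : ∀ i ∈ range r,
      (m - v + m / lam i - 1) / (m / lam i) + (v + m / lam i - 1) / (m / lam i)
        + (if (m / lam i) ∣ v then 1 else 0) = lam i + 1 := by
    intro i hi
    rw [mem_range] at hi
    have := cdiv_compl (hd i hi) (show v ≤ lam i * (m / lam i) by rw [hl i hi]; exact hv)
    rw [hl i hi] at this
    exact this
  have hsum := Finset.sum_congr rfl key
  rw [Finset.sum_add_distrib, Finset.sum_add_distrib, Finset.sum_add_distrib] at hsum
  rw [gfun, gfun, cfun, Finset.card_filter]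
  rw [Finset.sum_const, card_range, smul_eq_mul, mul_one] at hsum
  omega

lemma cfun_compl (hlam : ∀ i, i < r → 1 ≤ lam i ∧ lam i < m)
    (hdvd : ∀ j, j < r → lam j ∣ m) (v : ℕ) (hv : v ≤ m) :
    cfun m r lam (m - v) = cfun m r lam v := by
  have hl := hld hdvd
  rw [cfun, cfun]
  congr 1
  refine Finset.filter_congr fun i hi => ?_
  rw [mem_range] at hi
  have hdm : (m / lam i) ∣ m := Nat.div_dvd_of_dvd (hdvd i hi)
  constructor
  · intro h
    have h2 := Nat.dvd_sub hdm h
    have e : m - (m - v) = v := by omega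
    rwa [e] at h2
  · intro h
    exact Nat.dvd_sub hdm h

end

end Stmt12Aux

open Stmt12Aux in
/-- If λ_j ∣ m for every j, then η_s + η_{r+λ₀-1-s} = m for every r ≤ s ≤ λ₀ - 1. -/
theorem stmt12 (m r : ℕ) (lam : ℕ → ℕ) (hm : 2 ≤ m) (hr : 2 ≤ r)
    (hlam : ∀ i, i < r → 1 ≤ lam i ∧ lam i < m) (hdvd : ∀ j, j < r → lam j ∣ m)
    (lam0 : ℕ) (h0 : lam0 = ∑ i ∈ Finset.range r, lam i) (hrl : r < lam0) :
    ∀ s, r ≤ s → s ≤ lam0 - 1 →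
      eta m r lam s + eta m r lam (r + lam0 - 1 - s) = m := by
  intro s hs1 hs2
  have hsl0 : s ≤ ∑ i ∈ Finset.range r, lam i := by omega
  set v := eta m r lam s with hv
  -- basic bounds on v
  have hv1 : 1 ≤ v := by
    refine eta_ge hm hr hlam hdvd s 1 le_rfl (by omega) ?_ hsl0
    rw [gfun_one hlam]; omega
  have hvm1 : v ≤ m - 1 := by
    refine eta_le hm hr hlam hdvd s (m - 1) ?_
    have e : m - 1 + 1 = m := by omega
    rw [e, gfun_m hlam hdvd]
    omega
  have hvm : v ≤ m := by omega
  -- g v ≤ s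
  have hA : gfun m r lam v ≤ s := g_eta_le hm hr hlam hdvd s hs1 hsl0
  -- s + 1 ≤ g (v+1)
  have hB : s + 1 ≤ gfun m r lam (v + 1) := by
    by_contra hc
    push_neg at hc
    have := eta_ge hm hr hlam hdvd s (v + 1) (by omega) (by omega) (by omega) hsl0
    omega
  set s' := r + lam0 - 1 - s with hs'
  set w := m - v with hw
  have hstep_v : gfun m r lam (v + 1) = gfun m r lam v + cfun m r lam v :=
    gfun_step hlam v
  have hstep_w : gfun m r lam (w + 1) = gfun m r lam w + cfun m r lam w :=
    gfun_step hlam w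
  have hcompl : gfun m r lam w + gfun m r lam v + cfun m r lam v
      = (∑ i ∈ Finset.range r, lam i) + r := gfun_compl hlam hdvd v hvm
  have hcc : cfun m r lam w = cfun m r lam v := cfun_compl hlam hdvd v hvm
  have hcle : cfun m r lam v ≤ r := le_trans (Finset.card_filter_le _ _) (by simp)
  -- eta s' = w
  have hws : s' ≤ ∑ i ∈ Finset.range r, lam i := by omega
  have hge : w ≤ eta m r lam s' :=
    eta_ge hm hr hlam hdvd s' w (by omega) (by omega) (by omega) hws
  have hle : eta m r lam s' ≤ w :=
    eta_le hm hr hlam hdvd s' w (by omega)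
  omega
end

section
/- Let m ≥ 2 and r ≥ 2 be integers with gcd(m, r) = 1, and suppose λ₁ = ⋯ = λ_r = λ with 1 ≤ λ < m, gcd(m, λ) = 1, λ₀ = rλ. Then the numerical semigroup H = ⟨m, λ₀⟩ ∪ ⋃_{k=r}^{λ₀-1} {mk - k'λ₀ : 1 ≤ k' ≤ η_k}, with η_k as defined from the λ_i, equals ⟨m, r⟩. -/
open Finset

lemma eta_set_ub (m r l k : ℕ) (hr : 1 ≤ r) :
    ∀ v ∈ {v : ℕ | ∃ s : ℕ → ℕ, (∀ i, i < r → 1 ≤ s i ∧ s i ≤ l) ∧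
      (∑ i ∈ Finset.range r, s i) = k ∧ v = kinf m r (fun _ => l) s},
      v ≤ k / r * m / l := by
  rintro v ⟨s, hs, hsum, rfl⟩
  have h1 : ∃ i, i < r ∧ s i * r ≤ k := by
    by_contra h
    push_neg at h
    have h2 : ∀ i ∈ Finset.range r, k / r + 1 ≤ s i := by
      intro i hi
      rw [Finset.mem_range] at hi
      have h3 := h i hi
      have := (Nat.div_lt_iff_lt_mul (by omega : 0 < r)).mpr h3
      omega
    have h4 : (Finset.range r).card * (k / r + 1) ≤ ∑ i ∈ Finset.range r, s i :=
      Finset.card_nsmul_le_sum _ _ _ h2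
    rw [hsum, Finset.card_range] at h4
    have h5 := Nat.div_add_mod k r
    have h6 := Nat.mod_lt k (show 0 < r by omega)
    nlinarith
  obtain ⟨i0, hi0, hle⟩ := h1
  have hmem : s i0 * m / l ∈ {w : ℕ | ∃ i, i < r ∧ w = s i * m / (fun _ => l) i} :=
    ⟨i0, hi0, rfl⟩
  have h7 : kinf m r (fun _ => l) s ≤ s i0 * m / l := Nat.sInf_le hmem
  have h8 : s i0 ≤ k / r := Nat.le_div_iff_mul_le (by omega) |>.mpr hle
  calc kinf m r (fun _ => l) s ≤ s i0 * m / l := h7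
    _ ≤ k / r * m / l := Nat.div_le_div_right (Nat.mul_le_mul_right m h8)

lemma eta_ub (m r l k : ℕ) (hr : 1 ≤ r) :
    eta m r (fun _ => l) k ≤ k / r * m / l :=
  csSup_le' (eta_set_ub m r l k hr)

lemma eta_lb (m r l a0 t : ℕ) (hr : 2 ≤ r) (ha0 : a0 < r) (ht1 : 1 ≤ t) (ht2 : t < l) :
    t * m / l ≤ eta m r (fun _ => l) (a0 + r * t) := by
  set s : ℕ → ℕ := fun i => t + (if i < a0 then 1 else 0) with hsdef
  have hsum : (∑ i ∈ Finset.range r, s i) = a0 + r * t := by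
    rw [hsdef]
    rw [Finset.sum_add_distrib, Finset.sum_const, Finset.card_range]
    have : (∑ i ∈ Finset.range r, (if i < a0 then 1 else 0)) = a0 := by
      rw [← Finset.sum_filter]
      have h9 : (Finset.range r).filter (· < a0) = Finset.range a0 := by
        ext x; simp [Finset.mem_range, Finset.mem_filter]; omega
      rw [h9]; simp
    rw [this, smul_eq_mul]; omega
  have hbounds : ∀ i, i < r → 1 ≤ s i ∧ s i ≤ l := by
    intro i hi
    simp only [hsdef]
    split <;> omega
  have hkinf : t * m / l ≤ kinf m r (fun _ => l) s := by
    apply le_csInf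
    · exact ⟨s 0 * m / l, 0, by omega, rfl⟩
    · rintro w ⟨i, hi, rfl⟩
      have : t ≤ s i := by simp only [hsdef]; split <;> omega
      exact Nat.div_le_div_right (Nat.mul_le_mul_right m this)
  have hmem : kinf m r (fun _ => l) s ∈ {v : ℕ | ∃ s' : ℕ → ℕ,
      (∀ i, i < r → 1 ≤ s' i ∧ s' i ≤ l) ∧
      (∑ i ∈ Finset.range r, s' i) = a0 + r * t ∧ v = kinf m r (fun _ => l) s'} :=
    ⟨s, hbounds, hsum, rfl⟩
  have hbdd : BddAbove {v : ℕ | ∃ s' : ℕ → ℕ,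
      (∀ i, i < r → 1 ≤ s' i ∧ s' i ≤ l) ∧
      (∑ i ∈ Finset.range r, s' i) = a0 + r * t ∧ v = kinf m r (fun _ => l) s'} :=
    ⟨(a0 + r * t) / r * m / l, fun v hv => eta_set_ub m r l (a0 + r * t) (by omega) v hv⟩
  exact le_trans hkinf (le_csSup hbdd hmem)

/-- When λ₁ = ⋯ = λ_r = λ with gcd(m,λ) = gcd(m,r) = 1, the semigroup
⟨m,λ₀⟩ ∪ ⋃_k {mk - k'λ₀ : 1 ≤ k' ≤ η_k} equals ⟨m, r⟩. -/
theorem stmt13 (m r l : ℕ) (hm : 2 ≤ m) (hr : 2 ≤ r) (hcor : Nat.gcd m r = 1)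
    (hl1 : 1 ≤ l) (hlm : l < m) (hcol : Nat.gcd m l = 1)
    (lam0 : ℕ) (h0 : lam0 = r * l) :
    {y : ℤ | (∃ a b : ℕ, y = a * m + b * lam0) ∨
        ∃ k : ℕ, r ≤ k ∧ k ≤ lam0 - 1 ∧ ∃ k' : ℕ, 1 ≤ k' ∧ k' ≤ eta m r (fun _ => l) k ∧
          y = (m : ℤ) * k - (k' : ℤ) * lam0} =
      {y : ℤ | ∃ a b : ℕ, y = a * m + b * r} := by
  subst h0
  ext y
  simp only [Set.mem_setOf_eq]
  constructor
  · rintro (⟨a, b, hy⟩ | ⟨k, hk1, hk2, k', hk'1, hk'2, hy⟩)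
    · exact ⟨a, b * l, by rw [hy]; push_cast; ring⟩
    · have hb : k' * l ≤ k / r * m := by
        have h1 : k' ≤ k / r * m / l := le_trans hk'2 (eta_ub m r l k (by omega))
        exact (Nat.le_div_iff_mul_le (by omega)).mp h1
      refine ⟨k % r, k / r * m - k' * l, ?_⟩
      have e1 : (k : ℤ) = r * (k / r) + (k % r) := by exact_mod_cast (Nat.div_add_mod k r).symm
      rw [hy, Nat.cast_sub hb]
      push_cast
      linear_combination (m : ℤ) * e1
  · rintro ⟨a, b, hy⟩
    set a0 := a % r with ha0def
    set a1 := a / r with ha1def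
    have hBdef : a1 * m + b = a1 * m + b := rfl
    set B := a1 * m + b with hBdef
    set q := B / l with hqdef
    set b0 := B % l with hb0def
    have e1 : (a : ℤ) = r * a1 + a0 := by exact_mod_cast (Nat.div_add_mod a r).symm
    have e2 : (B : ℤ) = l * q + b0 := by exact_mod_cast (Nat.div_add_mod B l).symm
    have hBz : (B : ℤ) = a1 * m + b := by rw [hBdef]; push_cast; ring
    have hyl : y = a0 * m + b0 * r + q * (r * l) := by
      rw [hy]; linear_combination (m : ℤ) * e1 + (r : ℤ) * e2 - (r : ℤ) * hBz
    by_cases hb0 : b0 = 0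
    · exact Or.inl ⟨a0, q, by rw [hyl, hb0]; push_cast; ring⟩
    · have hb0lt : b0 < l := Nat.mod_lt _ (by omega)
      haveI : NeZero l := ⟨by omega⟩
      have hu : IsUnit (m : ZMod l) := by
        rw [ZMod.isUnit_iff_coprime]; exact hcol
      set x : ZMod l := (b0 : ZMod l) * (m : ZMod l)⁻¹ with hxdef
      set t := x.val with htdef
      have hxt : ((t : ℕ) : ZMod l) = x := ZMod.natCast_rightInverse x
      have hmx : (m : ZMod l) * x = (b0 : ZMod l) := by
        rw [hxdef, ← mul_assoc, mul_comm (m : ZMod l), mul_assoc,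
          ZMod.mul_inv_of_unit _ hu, mul_one]
      have htlt : t < l := ZMod.val_lt x
      have ht1 : 1 ≤ t := by
        rcases Nat.eq_zero_or_pos t with h | h
        · exfalso
          have hx0 : x = 0 := by rwa [← ZMod.val_eq_zero]
          rw [hx0, mul_zero] at hmx
          have hdvd := (ZMod.natCast_eq_zero_iff b0 l).mp hmx.symm
          have := Nat.le_of_dvd (by omega) hdvd
          omega
        · exact h
      have hmt : m * t % l = b0 := by
        have hmodeq : m * t ≡ b0 [MOD l] := by
          have hc : ((m * t : ℕ) : ZMod l) = ((b0 : ℕ) : ZMod l) := by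
            push_cast
            rw [hxt, hmx]
          exact (ZMod.natCast_eq_natCast_iff _ _ _).mp hc
        have h5 : m * t % l = b0 % l := hmodeq
        rwa [Nat.mod_eq_of_lt hb0lt] at h5
      set k' := m * t / l with hk'def
      have hk'l : l * k' + b0 = m * t := by
        have h := Nat.div_add_mod (m * t) l
        rw [hmt] at h
        exact h
      have hk'pos : 1 ≤ k' := by
        rcases Nat.eq_zero_or_pos k' with h | h
        · exfalso
          rw [h, Nat.mul_zero, Nat.zero_add] at hk'l
          have hmmt : m ≤ m * t := Nat.le_mul_of_pos_right m (by omega)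
          omega
        · exact h
      have ha0lt : a0 < r := Nat.mod_lt _ (by omega)
      have hketa : k' ≤ eta m r (fun _ => l) (a0 + r * t) := by
        have h := eta_lb m r l a0 t hr ha0lt ht1 htlt
        rwa [mul_comm t m] at h
      have hrk : r ≤ a0 + r * t := by
        have : r * 1 ≤ r * t := Nat.mul_le_mul_left r ht1
        omega
      have hkub : a0 + r * t ≤ r * l - 1 := by
        have h6 : r * (t + 1) ≤ r * l := Nat.mul_le_mul_left r (by omega)
        have h7 : r * (t + 1) = r * t + r := by ring
        omega
      have hmkz : (m : ℤ) * (a0 + r * t : ℕ) =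
          (a0 : ℤ) * m + b0 * r + k' * (r * l) := by
        have e3 : ((m * t : ℕ) : ℤ) = l * k' + b0 := by exact_mod_cast hk'l.symm
        push_cast
        push_cast at e3
        linear_combination (r : ℤ) * e3
      by_cases hqk : q < k'
      · refine Or.inr ⟨a0 + r * t, hrk, by omega, k' - q, by omega, le_trans (Nat.sub_le k' q) hketa, ?_⟩
        rw [hyl, Nat.cast_sub (by omega : q ≤ k')]
        push_cast
        push_cast at hmkz
        linear_combination (-1 : ℤ) * hmkz
      · refine Or.inl ⟨a0 + r * t, q - k', ?_⟩
        rw [hyl, Nat.cast_sub (by omega : k' ≤ q)]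
        push_cast
        push_cast at hmkz
        linear_combination (-1 : ℤ) * hmkz
end

section
/- Let H be a numerical semigroup and n a nonzero element of H with Apéry set Ap(H,n) = {a₀ < a₁ < ⋯ < a_{n-1}}. Then H is symmetric (i.e., its Frobenius number F satisfies F = 2g - 1 where g is the genus) if and only if a_i + a_{n-1-i} = a_{n-1} for each i = 0,…,n-1. -/
open Finset

private lemma le_of_strictMonoNat {n : ℕ} {f : Fin n → ℕ} (hf : StrictMono f) :
    ∀ k (h : k < n), k ≤ f ⟨k, h⟩ := by
  intro k
  induction k with
  | zero => intro _; exact Nat.zero_le _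
  | succ m ih =>
    intro h
    have h1 : m < n := by omega
    have h2 := hf (show (⟨m, h1⟩ : Fin n) < ⟨m + 1, h⟩ from by simp [Fin.lt_def])
    have := ih h1
    omega

private lemma le_of_strictMonoFin {n : ℕ} {f : Fin n → Fin n} (hf : StrictMono f)
    (i : Fin n) : (i : ℕ) ≤ (f i : ℕ) := by
  have hv : StrictMono (fun j => (f j : ℕ)) := fun x y hxy => hf hxy
  have := le_of_strictMonoNat hv i.1 i.2
  simpa using this

private lemma fin_strictMono_id {n : ℕ} {f : Fin n → Fin n} (hf : StrictMono f) :
    ∀ i, f i = i := by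
  have hg : StrictMono (fun j => Fin.rev (f (Fin.rev j))) := by
    intro x y hxy
    exact Fin.rev_lt_rev.mpr (hf (Fin.rev_lt_rev.mpr hxy))
  intro i
  have h1 := le_of_strictMonoFin hf i
  have h2 := le_of_strictMonoFin hg (Fin.rev i)
  simp only [Fin.rev_rev, Fin.val_rev] at h2
  have := (f i).2
  have := i.2
  exact Fin.ext (by omega)

/-- H is symmetric iff a_i + a_{n-1-i} = a_{n-1} for the ordered Apéry set a₀ < ⋯ < a_{n-1}. -/
theorem stmt15 (H : Set ℕ) (hH : IsNumericalSemigroup H) (n : ℕ) (hn : n ∈ H) (hn0 : n ≠ 0)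
    (a : Fin n → ℕ) (hmono : StrictMono a)
    (hap : Set.range a = {s ∈ H | s < n ∨ s - n ∉ H}) :
    (∃ F : ℤ, IsGreatest {x : ℤ | ∀ h ∈ H, (h : ℤ) ≠ x} F ∧
        F = 2 * (Set.ncard {x : ℕ | x ∉ H} : ℤ) - 1) ↔
      ∀ i : Fin n, a i + a (Fin.rev i) = a ⟨n - 1, by omega⟩ := by
  classical
  obtain ⟨h0, hadd, hfin⟩ := hH
  set A := a ⟨n - 1, by omega⟩ with hAdef
  -- membership in the Apéry set
  have hmemAp : ∀ w, (∃ i, a i = w) ↔ (w ∈ H ∧ (w < n ∨ w - n ∉ H)) := by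
    intro w
    have := Set.ext_iff.mp hap w
    simpa [Set.mem_range, Set.mem_setOf_eq, and_or_left] using this
  have haH : ∀ i, a i ∈ H := fun i => ((hmemAp (a i)).mp ⟨i, rfl⟩).1
  have hle : ∀ i, a i ≤ A := by
    intro i
    exact hmono.monotone (show i ≤ ⟨n - 1, by omega⟩ from by
      rw [Fin.le_def]; exact Nat.le_sub_one_of_lt i.2 |>.trans (le_refl _))
  have hAn1 : n - 1 ≤ A := le_of_strictMonoNat hmono (n - 1) (by omega)
  -- multiples of n are in H
  have hmul : ∀ t : ℕ, t * n ∈ H := by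
    intro t
    induction t with
    | zero => simpa using h0
    | succ m ih => have := hadd _ ih _ hn; simpa [Nat.succ_mul] using this
  -- every gap jumps into the Apéry set
  have hgap : ∀ y, y ∉ H → ∃ i t, 1 ≤ t ∧ y + t * n = a i := by
    intro y hy
    obtain ⟨B, hB⟩ := hfin.bddAbove
    have hex : ∃ t, y + t * n ∈ H := by
      refine ⟨B + 1, ?_⟩
      by_contra hc
      have hmem : y + (B + 1) * n ∈ {x : ℕ | x ∉ H} := hc
      have := hB hmem
      have hge : B + 1 ≤ (B + 1) * n := Nat.le_mul_of_pos_right _ (Nat.pos_of_ne_zero hn0)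
      omega
    have hts := Nat.find_spec hex
    have ht0 : Nat.find hex ≠ 0 := by
      intro h; rw [h] at hts; simp at hts; exact hy hts
    obtain ⟨t', ht'⟩ : ∃ t', Nat.find hex = t' + 1 := ⟨Nat.find hex - 1, by omega⟩
    rw [ht'] at hts
    have htm : y + t' * n ∉ H := Nat.find_min hex (by omega)
    have hw : (∃ i, a i = y + (t' + 1) * n) := by
      refine (hmemAp _).mpr ⟨hts, Or.inr ?_⟩
      have : y + (t' + 1) * n - n = y + t' * n := by
        have : (t' + 1) * n = t' * n + n := by ring
        omega
      rwa [this]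
    obtain ⟨i, hi⟩ := hw
    exact ⟨i, t' + 1, by omega, hi.symm⟩
  -- every gap is ≤ A - n
  have hgapA : ∀ y, y ∉ H → y + n ≤ A := by
    intro y hy
    obtain ⟨i, t, ht, hyt⟩ := hgap y hy
    have h1 := hle i
    have h2 : n ≤ t * n := Nat.le_mul_of_pos_left _ (by omega)
    omega
  -- A - n is not in H (when it makes sense)
  have hFnot : ∀ z, z + n = A → z ∉ H := by
    intro z hz hzH
    obtain ⟨hAH, hAor⟩ := (hmemAp A).mp ⟨_, rfl⟩
    rcases hAor with h | h
    · omega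
    · exact h (by rwa [show A - n = z from by omega])
  -- everything above A - n is in H
  have habove : ∀ x : ℕ, A < x + n → x ∈ H := by
    intro x hx
    by_contra hc
    have := hgapA x hc
    omega
  -- the symmetry condition
  set Sym := ∀ y, y ∉ H → ∃ z ∈ H, z + (y + n) = A with hSymdef
  -- counting setup
  set G : Finset ℕ := hfin.toFinset with hGdef
  have hGmem : ∀ y, y ∈ G ↔ y ∉ H := by intro y; simp [hGdef]
  have hgcard : Set.ncard {x : ℕ | x ∉ H} = G.card :=
    Set.ncard_eq_toFinset_card _ hfin
  set N := A + 1 - n with hNdef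
  have hGR : G ⊆ Finset.range N := by
    intro y hy
    have := hgapA y ((hGmem y).mp hy)
    simp only [Finset.mem_range]
    omega
  set S := Finset.range N \ G with hSdef
  have hScard : S.card + G.card = N := by
    rw [hSdef, Finset.card_sdiff_of_subset hGR]
    have := Finset.card_le_card hGR
    simp only [Finset.card_range] at this ⊢
    omega
  have hSmem : ∀ x, x ∈ S ↔ (x < N ∧ x ∈ H) := by
    intro x
    simp [hSdef, hGmem, Finset.mem_range]
  have hSG : ∀ x ∈ S, N - 1 - x ∈ G := by
    intro x hx
    obtain ⟨hxN, hxH⟩ := (hSmem x).mp hx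
    have hAn : n ≤ A := by omega
    rw [hGmem]
    intro hc
    have : (N - 1 - x) + x ∈ H := hadd _ hc _ hxH
    have he : (N - 1 - x) + x = A - n := by omega
    rw [he] at this
    exact hFnot (A - n) (by omega) this
  have hinjS : Set.InjOn (fun x => N - 1 - x) S := by
    intro x hx y hy hxy
    have h1 := (hSmem x).mp hx
    have h2 := (hSmem y).mp hy
    simp only at hxy
    omega
  have hcardle : S.card ≤ G.card :=
    Finset.card_le_card_of_injOn _ hSG hinjS
  -- Step 1 : N = 2 * G.card ↔ Sym
  have step1 : N = 2 * G.card ↔ Sym := by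
    constructor
    · intro hN y hy
      have hSeq : S.card = G.card := by omega
      have himg : S.image (fun x => N - 1 - x) = G := by
        apply Finset.eq_of_subset_of_card_le
        · intro z hz
          obtain ⟨x, hx, rfl⟩ := Finset.mem_image.mp hz
          exact hSG x hx
        · rw [Finset.card_image_of_injOn hinjS, hSeq]
      have hyG : y ∈ G := (hGmem y).mpr hy
      rw [← himg] at hyG
      obtain ⟨x, hx, hxy⟩ := Finset.mem_image.mp hyG
      obtain ⟨hxN, hxH⟩ := (hSmem x).mp hx
      refine ⟨x, hxH, ?_⟩
      have hyN : y < N := Finset.mem_range.mp (hGR ((hGmem y).mpr hy))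
      omega
    · intro hsym
      have hsurj : G ⊆ S.image (fun x => N - 1 - x) := by
        intro y hy
        have hyH := (hGmem y).mp hy
        obtain ⟨z, hzH, hz⟩ := hsym y hyH
        have hzS : z ∈ S := (hSmem z).mpr ⟨by omega, hzH⟩
        refine Finset.mem_image.mpr ⟨z, hzS, ?_⟩
        omega
      have := Finset.card_le_card hsurj
      rw [Finset.card_image_of_injOn hinjS] at this
      omega
  -- Step 2 : Sym ↔ Apéry symmetry
  have step2 : Sym ↔ ∀ i, ∃ j, a i + a j = A := by
    constructor
    · intro hsym i
      set w := a i with hw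
      have hwH := haH i
      have hwor := ((hmemAp w).mp ⟨i, rfl⟩).2
      have hwA := hle i
      have hzH : A - w ∈ H := by
        rcases Nat.lt_or_ge w n with hlt | hge
        · exact habove _ (by omega)
        · have hwn : w - n ∉ H := by rcases hwor with h | h; omega; exact h
          obtain ⟨z, hzH, hz⟩ := hsym (w - n) hwn
          have : z = A - w := by omega
          rwa [← this]
      have hzap : ∃ j, a j = A - w := by
        refine (hmemAp _).mpr ⟨hzH, ?_⟩
        rcases Nat.lt_or_ge (A - w) n with hlt | hge
        · exact Or.inl hlt
        · refine Or.inr fun hc => ?_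
          have : (A - w - n) + w ∈ H := hadd _ hc _ hwH
          have he : (A - w - n) + w = A - n := by omega
          rw [he] at this
          exact hFnot (A - n) (by omega) this
      obtain ⟨j, hj⟩ := hzap
      exact ⟨j, by omega⟩
    · intro hap2 y hy
      obtain ⟨i, t, ht, hyt⟩ := hgap y hy
      obtain ⟨j, hj⟩ := hap2 i
      obtain ⟨t', rfl⟩ : ∃ t', t = t' + 1 := ⟨t - 1, by omega⟩
      refine ⟨a j + t' * n, hadd _ (haH j) _ (hmul t'), ?_⟩
      have he : (t' + 1) * n = t' * n + n := by ring
      rw [he] at hyt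
      set k := t' * n
      omega
  -- Step 3 : Apéry symmetry ↔ pairing
  have step3 : (∀ i, ∃ j, a i + a j = A) ↔ ∀ i : Fin n, a i + a (Fin.rev i) = A := by
    constructor
    · intro hap2
      choose j hj using hap2
      have hanti : ∀ x y : Fin n, x < y → j y < j x := by
        intro x y hxy
        have h1 := hj x
        have h2 := hj y
        have h3 := hmono hxy
        have : a (j y) < a (j x) := by omega
        exact (hmono.lt_iff_lt).mp this
      have hsm : StrictMono (fun i => j (Fin.rev i)) := by
        intro x y hxy
        exact hanti _ _ (Fin.rev_lt_rev.mpr hxy)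
      have hid := fin_strictMono_id hsm
      intro i
      have h1 := hj (Fin.rev i)
      have h2 := hid i
      rw [h2] at h1
      omega
    · intro hp i
      exact ⟨Fin.rev i, hp i⟩
  -- Step 0 : the left-hand side ↔ N = 2 * G.card
  have hFF : IsGreatest {x : ℤ | ∀ h ∈ H, (h : ℤ) ≠ x} ((A : ℤ) - n) := by
    constructor
    · intro h hh
      rcases Nat.lt_or_ge A n with hlt | hge
      · have : A = n - 1 := by omega
        have : (A : ℤ) - n = -1 := by omega
        rw [this]
        have : (0 : ℤ) ≤ (h : ℤ) := Int.natCast_nonneg h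
        omega
      · intro hc
        have hh' : h + n = A := by omega
        exact hFnot h hh' hh
    · intro x hx
      rcases lt_or_ge x 0 with hneg | hpos
      · have : (-1 : ℤ) ≤ (A : ℤ) - n := by omega
        omega
      · obtain ⟨m, rfl⟩ := Int.eq_ofNat_of_zero_le hpos
        have hmH : m ∉ H := fun hc => hx m hc rfl
        have := hgapA m hmH
        omega
  have step0 : (∃ F : ℤ, IsGreatest {x : ℤ | ∀ h ∈ H, (h : ℤ) ≠ x} F ∧
      F = 2 * (Set.ncard {x : ℕ | x ∉ H} : ℤ) - 1) ↔ N = 2 * G.card := by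
    rw [hgcard]
    constructor
    · intro ⟨F, hF, hFeq⟩
      have := hF.unique hFF
      rw [this] at hFeq
      omega
    · intro hN
      exact ⟨(A : ℤ) - n, hFF, by omega⟩
  rw [step0, step1, step2, step3]
end
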